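/- arXiv:2108.04241 — 4 statements merged into one kernel-verified Lean document; each statement's English description precedes it below -/
import Mathlib

section
/- For f continuous on [0,1], the Riemann–Liouville fractional integral Iᵅ f converges uniformly to the integral I¹ f(x) = ∫₀ˣ f(t) dt as α → 1. -/
open MeasureTheory Set

/-- Riemann–Liouville fractional integral of order `α` with base point `0`
    (with the convention `I⁰ = Id`). -/
noncomputable def RL (α : ℝ) (f : ℝ → ℝ) (x : ℝ) : ℝ :=
  if α = 0 then f x else (Real.Gamma α)⁻¹ * ∫ t in (0:ℝ)..x, (x - t) ^ (α - 1) * f t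

namespace RLaux

lemma kernel_integrable {α x : ℝ} (hα : 0 < α) :
    IntervalIntegrable (fun t => (x - t) ^ (α - 1)) volume 0 x := by
  have h := (intervalIntegral.intervalIntegrable_rpow' (a := 0) (b := x)
    (show (-1:ℝ) < α - 1 by linarith)).comp_sub_left x
  simpa using h.symm

lemma kernel_integral {α x : ℝ} (hα : 0 < α) (hx0 : 0 ≤ x) :
    ∫ t in (0:ℝ)..x, (x - t) ^ (α - 1) = x ^ α / α := by
  have h := intervalIntegral.integral_comp_sub_left (a := 0) (b := x)
    (fun u => u ^ (α - 1)) x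
  simp only [sub_self, sub_zero] at h
  rw [h, integral_rpow (Or.inl (by linarith))]
  rw [Real.zero_rpow (by linarith : α - 1 + 1 ≠ 0)]
  ring_nf

lemma rpow_diff_le {x β γ : ℝ} (hx : 0 < x) (hx1 : x ≤ 1) (hβ : 0 < β) (hβγ : β ≤ γ) :
    x ^ β - x ^ γ ≤ (γ - β) / β := by
  have hp : (0:ℝ) < x ^ β := Real.rpow_pos_of_pos hx β
  have hexp : 1 + (γ - β) * Real.log x ≤ x ^ (γ - β) := by
    rw [Real.rpow_def_of_pos hx]
    have := Real.add_one_le_exp (Real.log x * (γ - β))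
    nlinarith [this]
  have hlogle : -(β * Real.log x) ≤ (x ^ β)⁻¹ - 1 := by
    have h := Real.log_le_sub_one_of_pos (inv_pos.2 hp)
    rw [Real.log_inv, Real.log_rpow hx, neg_le] at h
    linarith
  have hmul : x ^ β * x ^ (γ - β) = x ^ γ := by
    rw [← Real.rpow_add hx]; ring_nf
  have hpinv : x ^ β * (x ^ β)⁻¹ = 1 := mul_inv_cancel₀ hp.ne'
  rw [le_div_iff₀ hβ]
  nlinarith [mul_le_mul_of_nonneg_left hexp hp.le,
    mul_le_mul_of_nonneg_left hlogle hp.le, sub_nonneg.2 hβγ,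
    mul_le_mul_of_nonneg_left (mul_le_mul_of_nonneg_left hlogle hp.le) (sub_nonneg.2 hβγ)]

lemma rpow_sub_self_abs {α x : ℝ} (hα1 : 1/2 ≤ α) (hα2 : α ≤ 3/2)
    (hx0 : 0 ≤ x) (hx1 : x ≤ 1) : |x ^ α - x| ≤ 2 * |α - 1| := by
  rcases eq_or_lt_of_le hx0 with rfl | hx
  · rw [Real.zero_rpow (by linarith : α ≠ 0)]
    simp [abs_nonneg]
  · rcases le_total α 1 with hle | hge
    · have h1 : x ≤ x ^ α := by
        calc x = x ^ (1:ℝ) := (Real.rpow_one x).symm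
        _ ≤ x ^ α := Real.rpow_le_rpow_of_exponent_ge hx hx1 hle
      have h2 : x ^ α - x ^ (1:ℝ) ≤ (1 - α) / α :=
        rpow_diff_le hx hx1 (by linarith) hle
      rw [Real.rpow_one] at h2
      rw [abs_of_nonneg (by linarith), abs_of_nonpos (by linarith)]
      have hα0 : (0:ℝ) < α := by linarith
      have h3 : (1 - α) / α ≤ 2 * (1 - α) := by
        rw [div_le_iff₀ hα0]; nlinarith
      linarith
    · have h1 : x ^ α ≤ x := by
        calc x ^ α ≤ x ^ (1:ℝ) := Real.rpow_le_rpow_of_exponent_ge hx hx1 hge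
        _ = x := Real.rpow_one x
      have h2 : x ^ (1:ℝ) - x ^ α ≤ (α - 1) / 1 :=
        rpow_diff_le hx hx1 one_pos hge
      rw [Real.rpow_one] at h2
      rw [abs_of_nonpos (by linarith), abs_of_nonneg (by linarith)]
      linarith

lemma int_bound {f : ℝ → ℝ} {M α x : ℝ}
    (hM : ∀ t ∈ Icc (0:ℝ) 1, |f t| ≤ M)
    (hα1 : 1/2 ≤ α) (hx : x ∈ Icc (0:ℝ) 1) :
    |∫ t in (0:ℝ)..x, (x - t) ^ (α - 1) * f t| ≤ 2 * M := by
  have hα0 : (0:ℝ) < α := by linarith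
  obtain ⟨hx0, hx1⟩ := hx
  have hM0 : 0 ≤ M := le_trans (abs_nonneg _) (hM 0 (by norm_num))
  have hker := kernel_integrable (α := α) (x := x) hα0
  have hb : ∀ᵐ t ∂(volume.restrict (Set.uIoc (0:ℝ) x)),
      ‖(x - t) ^ (α - 1) * f t‖ ≤ (x - t) ^ (α - 1) * M := by
    filter_upwards [ae_restrict_mem measurableSet_uIoc] with t ht
    rw [uIoc_of_le hx0] at ht
    have h0 : 0 ≤ x - t := by linarith [ht.2]
    have h2 := hM t ⟨ht.1.le, ht.2.trans hx1⟩
    rw [Real.norm_eq_abs, abs_mul, abs_of_nonneg (Real.rpow_nonneg h0 _)]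
    exact mul_le_mul_of_nonneg_left h2 (Real.rpow_nonneg h0 _)
  have h := intervalIntegral.norm_integral_le_abs_of_norm_le hb (hker.mul_const M)
  rw [intervalIntegral.integral_mul_const, kernel_integral hα0 hx0,
    Real.norm_eq_abs] at h
  have hx' : x ^ α ≤ 1 := Real.rpow_le_one hx0 hx1 hα0.le
  have hxp : 0 ≤ x ^ α := Real.rpow_nonneg hx0 α
  have h3 : x ^ α / α * M ≤ 2 * M := by
    have h4 : x ^ α / α ≤ 2 := by rw [div_le_iff₀ hα0]; nlinarith
    nlinarith
  have h5 : |x ^ α / α * M| = x ^ α / α * M := abs_of_nonneg (by positivity)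
  rw [h5] at h
  linarith

lemma diff_bound {f : ℝ → ℝ} {M α x : ℝ} (hf : ContinuousOn f (Icc (0:ℝ) 1))
    (hM : ∀ t ∈ Icc (0:ℝ) 1, |f t| ≤ M)
    (hα1 : 1/2 ≤ α) (hα2 : α ≤ 3/2) (hx : x ∈ Icc (0:ℝ) 1) :
    |(∫ t in (0:ℝ)..x, (x - t) ^ (α - 1) * f t) - ∫ t in (0:ℝ)..x, f t|
      ≤ M * (|1/α - 1| + 2 * |α - 1|) := by
  have hα0 : (0:ℝ) < α := by linarith
  obtain ⟨hx0, hx1⟩ := hx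
  have hM0 : 0 ≤ M := le_trans (abs_nonneg _) (hM 0 (by norm_num))
  have hker := kernel_integrable (α := α) (x := x) hα0
  have hfc : ContinuousOn f (Set.uIcc 0 x) :=
    hf.mono (by rw [uIcc_of_le hx0]; exact Icc_subset_Icc le_rfl hx1)
  have hprod : IntervalIntegrable (fun t => (x - t) ^ (α - 1) * f t) volume 0 x :=
    hker.mul_continuousOn hfc
  have hfint : IntervalIntegrable f volume 0 x := hfc.intervalIntegrable
  rw [← intervalIntegral.integral_sub hprod hfint]
  have hx' : x ^ α ≤ 1 := Real.rpow_le_one hx0 hx1 hα0.le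
  have hxp : 0 ≤ x ^ α := Real.rpow_nonneg hx0 α
  have habs := rpow_sub_self_abs hα1 hα2 hx0 hx1
  have hae2 : ∀ᵐ t ∂(volume.restrict (Set.uIoc (0:ℝ) x)), t ≠ x := by
    apply ae_restrict_of_ae
    rw [ae_iff]
    have : {a : ℝ | ¬ a ≠ x} = {x} := by ext t; simp
    rw [this]
    exact Real.volume_singleton
  rcases le_total α 1 with hle | hge
  · -- kernel ≥ 1
    have hb : ∀ᵐ t ∂(volume.restrict (Set.uIoc (0:ℝ) x)),
        ‖(x - t) ^ (α - 1) * f t - f t‖ ≤ ((x - t) ^ (α - 1) - 1) * M := by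
      filter_upwards [ae_restrict_mem measurableSet_uIoc, hae2] with t ht htx
      rw [uIoc_of_le hx0] at ht
      have htlt : t < x := lt_of_le_of_ne ht.2 htx
      have h1 : 1 ≤ (x - t) ^ (α - 1) :=
        Real.one_le_rpow_of_pos_of_le_one_of_nonpos (by linarith)
          (by linarith [ht.1]) (by linarith)
      have h2 : |f t| ≤ M := hM t ⟨ht.1.le, ht.2.trans hx1⟩
      have he : (x - t) ^ (α - 1) * f t - f t = ((x - t) ^ (α - 1) - 1) * f t := by
        ring
      rw [he, Real.norm_eq_abs, abs_mul, abs_of_nonneg (by linarith)]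
      exact mul_le_mul_of_nonneg_left h2 (by linarith)
    have hgi : IntervalIntegrable (fun t => ((x - t) ^ (α - 1) - 1) * M) volume 0 x :=
      (hker.sub intervalIntegrable_const).mul_const M
    have h := intervalIntegral.norm_integral_le_abs_of_norm_le hb hgi
    rw [intervalIntegral.integral_mul_const,
      intervalIntegral.integral_sub hker intervalIntegrable_const,
      kernel_integral hα0 hx0, intervalIntegral.integral_const, smul_eq_mul,
      mul_one, sub_zero, Real.norm_eq_abs] at h
    have hinv1 : (1:ℝ) ≤ 1 / α := by rw [le_div_iff₀ hα0, one_mul]; exact hle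
    have hxa : x ≤ x ^ α := by
      rcases eq_or_lt_of_le hx0 with rfl | hxx
      · simp [Real.zero_rpow hα0.ne']
      · calc x = x ^ (1:ℝ) := (Real.rpow_one x).symm
          _ ≤ x ^ α := Real.rpow_le_rpow_of_exponent_ge hxx hx1 hle
    have hxle : x ≤ x ^ α / α := by rw [le_div_iff₀ hα0]; nlinarith
    have h5 : x ^ α - x ≤ 2 * (1 - α) := by
      rw [abs_of_nonpos (by linarith : α - 1 ≤ 0)] at habs
      linarith [le_abs_self (x ^ α - x)]
    have hkey : x ^ α / α - x ≤ (1 / α - 1) + 2 * (1 - α) := by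
      have hprod0 : 0 ≤ (1 - x ^ α) * (1 / α - 1) :=
        mul_nonneg (by linarith) (by linarith)
      have hdiv : x ^ α / α = x ^ α * (1 / α) := by ring
      nlinarith [hprod0, h5]
    have habs2 : |(x ^ α / α - x) * M| = (x ^ α / α - x) * M :=
      abs_of_nonneg (mul_nonneg (by linarith) hM0)
    rw [habs2] at h
    have e1 : |1/α - 1| = 1/α - 1 := abs_of_nonneg (by linarith)
    have e2 : |α - 1| = 1 - α := by rw [abs_of_nonpos (by linarith : α - 1 ≤ 0)]; ring
    rw [e1, e2]
    nlinarith [h, hkey]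
  · -- kernel ≤ 1
    have hb : ∀ᵐ t ∂(volume.restrict (Set.uIoc (0:ℝ) x)),
        ‖(x - t) ^ (α - 1) * f t - f t‖ ≤ (1 - (x - t) ^ (α - 1)) * M := by
      filter_upwards [ae_restrict_mem measurableSet_uIoc] with t ht
      rw [uIoc_of_le hx0] at ht
      have h0 : 0 ≤ x - t := by linarith [ht.2]
      have h1 : (x - t) ^ (α - 1) ≤ 1 :=
        Real.rpow_le_one h0 (by linarith [ht.1]) (by linarith)
      have h2 : |f t| ≤ M := hM t ⟨ht.1.le, ht.2.trans hx1⟩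
      have he : (x - t) ^ (α - 1) * f t - f t = -((1 - (x - t) ^ (α - 1)) * f t) := by
        ring
      rw [he, Real.norm_eq_abs, abs_neg, abs_mul, abs_of_nonneg (by linarith)]
      exact mul_le_mul_of_nonneg_left h2 (by linarith)
    have hgi : IntervalIntegrable (fun t => (1 - (x - t) ^ (α - 1)) * M) volume 0 x :=
      (intervalIntegrable_const.sub hker).mul_const M
    have h := intervalIntegral.norm_integral_le_abs_of_norm_le hb hgi
    rw [intervalIntegral.integral_mul_const,
      intervalIntegral.integral_sub intervalIntegrable_const hker,
      kernel_integral hα0 hx0, intervalIntegral.integral_const, smul_eq_mul,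
      mul_one, sub_zero, Real.norm_eq_abs] at h
    have hinv1 : 1 / α ≤ 1 := by rw [div_le_iff₀ hα0, one_mul]; exact hge
    have hinvpos : 0 < 1 / α := by positivity
    have hxa : x ^ α ≤ x := by
      rcases eq_or_lt_of_le hx0 with rfl | hxx
      · simp [Real.zero_rpow hα0.ne']
      · calc x ^ α ≤ x ^ (1:ℝ) := Real.rpow_le_rpow_of_exponent_ge hxx hx1 hge
          _ = x := Real.rpow_one x
    have hxle : x ^ α / α ≤ x := by
      rw [div_le_iff₀ hα0]; nlinarith
    have h5 : x - x ^ α ≤ 2 * (α - 1) := by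
      rw [abs_of_nonneg (by linarith : 0 ≤ α - 1)] at habs
      linarith [neg_le_abs (x ^ α - x)]
    have hkey : x - x ^ α / α ≤ (1 - 1 / α) + 2 * (α - 1) := by
      have hprod0 : 0 ≤ (1 - x ^ α) * (1 - 1 / α) :=
        mul_nonneg (by linarith) (by linarith)
      have hdiv : x ^ α / α = x ^ α * (1 / α) := by ring
      nlinarith [hprod0, h5, hdiv]
    have habs2 : |(x - x ^ α / α) * M| = (x - x ^ α / α) * M :=
      abs_of_nonneg (mul_nonneg (by linarith) hM0)
    rw [habs2] at h
    have e1 : |1/α - 1| = 1 - 1/α := by rw [abs_of_nonpos (by linarith : 1/α - 1 ≤ 0)]; ring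
    have e2 : |α - 1| = α - 1 := abs_of_nonneg (by linarith)
    rw [e1, e2]
    nlinarith [h, hkey]

end RLaux

/-- For continuous `f` on `[0,1]`, the Riemann–Liouville fractional integral `Iᵅ f`
    converges uniformly on `[0,1]` to `I¹ f (x) = ∫₀ˣ f` as `α → 1`. -/
theorem rl_tendsto_one_uniformly (f : ℝ → ℝ) (hf : ContinuousOn f (Icc (0:ℝ) 1)) :
    TendstoUniformlyOn (fun (α : ℝ) (x : ℝ) => RL α f x)
      (fun x => ∫ t in (0:ℝ)..x, f t) (nhds (1:ℝ)) (Icc (0:ℝ) 1) := by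
  obtain ⟨M, hM⟩ := isCompact_Icc.exists_bound_of_continuousOn hf
  simp only [Real.norm_eq_abs] at hM
  have hM0 : 0 ≤ M := le_trans (abs_nonneg _) (hM 0 (by norm_num))
  rw [Metric.tendstoUniformlyOn_iff]
  intro ε hε
  set g : ℝ → ℝ := fun α =>
    |(Real.Gamma α)⁻¹ - 1| * (2 * M) + M * (|1/α - 1| + 2 * |α - 1|) with hg
  have hΓ : ContinuousAt Real.Gamma 1 :=
    (Real.differentiableAt_Gamma (fun m =>
      (lt_of_le_of_lt (neg_nonpos.2 (Nat.cast_nonneg m)) one_pos).ne')).continuousAt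
  have hΓinv : ContinuousAt (fun α : ℝ => (Real.Gamma α)⁻¹) 1 :=
    hΓ.inv₀ (by rw [Real.Gamma_one]; norm_num)
  have hgc : ContinuousAt g 1 := by
    apply ContinuousAt.add
    · exact ((hΓinv.sub continuousAt_const).abs).mul continuousAt_const
    · apply continuousAt_const.mul
      apply ContinuousAt.add
      · exact ((continuousAt_const.div continuousAt_id one_ne_zero).sub
          continuousAt_const).abs
      · exact continuousAt_const.mul ((continuousAt_id.sub continuousAt_const).abs)
  have hg1 : g 1 = 0 := by simp [hg, Real.Gamma_one]
  have hev : ∀ᶠ α in nhds (1:ℝ), g α < ε := by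
    have := hgc.tendsto
    rw [hg1] at this
    exact this.eventually_lt_const hε
  have hIoo : ∀ᶠ α in nhds (1:ℝ), α ∈ Ioo (1/2 : ℝ) (3/2) :=
    Ioo_mem_nhds (by norm_num) (by norm_num)
  filter_upwards [hev, hIoo] with α h1 h2
  intro x hx
  have hα1 : 1/2 ≤ α := h2.1.le
  have hα2 : α ≤ 3/2 := h2.2.le
  have hα0 : (0:ℝ) < α := by linarith
  rw [Real.dist_eq, RL, if_neg hα0.ne']
  set I := ∫ t in (0:ℝ)..x, (x - t) ^ (α - 1) * f t with hI
  set J := ∫ t in (0:ℝ)..x, f t with hJ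
  have e : J - (Real.Gamma α)⁻¹ * I =
      -(((Real.Gamma α)⁻¹ - 1) * I) + -(I - J) := by ring
  have hIb : |I| ≤ 2 * M := RLaux.int_bound hM hα1 hx
  have hIJ : |I - J| ≤ M * (|1/α - 1| + 2 * |α - 1|) :=
    RLaux.diff_bound hf hM hα1 hα2 hx
  calc |J - (Real.Gamma α)⁻¹ * I|
      ≤ |(Real.Gamma α)⁻¹ - 1| * |I| + |I - J| := by
        rw [e]
        refine (abs_add_le _ _).trans ?_
        rw [abs_neg, abs_neg, abs_mul]
    _ ≤ |(Real.Gamma α)⁻¹ - 1| * (2 * M) + M * (|1/α - 1| + 2 * |α - 1|) := by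
        gcongr
    _ < ε := h1
end

section
/- Let 0 < α ≤ 1 and let f be of the form f = I^{1-α} φ with φ ∈ L¹(0,1). Then the Caputo fractional derivative of the Riemann–Liouville integral of f recovers f: (D^α_C (Iᵅ f))(x) = f(x) for almost every x ∈ [0,1], where D^α_C g = I^{1-α}(g'). -/
open MeasureTheory Set

section Auxiliary

open Filter Topology Interval

lemma caputo_beta_eqon {α : ℝ} :
    EqOn (fun u : ℝ => ((u ^ (-α) * (1-u) ^ (α-1) : ℝ) : ℂ))
      (fun u : ℝ => (u:ℂ) ^ ((1-α:ℝ)-1 : ℂ) * (1-(u:ℂ)) ^ ((α:ℝ)-1 : ℂ)) (Icc 0 1) := by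
  intro u hu
  simp only [Complex.ofReal_mul]
  rw [Complex.ofReal_cpow hu.1, Complex.ofReal_cpow (by linarith [hu.2] : (0:ℝ) ≤ 1 - u)]
  push_cast
  ring_nf

lemma caputo_beta_integrable {α : ℝ} (hα : 0 < α) (hα1 : α < 1) :
    IntervalIntegrable (fun u : ℝ => u ^ (-α) * (1-u) ^ (α-1)) volume 0 1 := by
  have hc := Complex.betaIntegral_convergent (u := (1-α : ℝ)) (v := (α : ℝ))
    (by simp [hα1]) (by simpa using hα)
  rw [intervalIntegrable_iff, uIoc_of_le (zero_le_one)] at hc ⊢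
  have : IntegrableOn (fun u : ℝ => ((u ^ (-α) * (1-u) ^ (α-1) : ℝ) : ℂ)) (Ioc 0 1) volume := by
    apply hc.congr_fun _ measurableSet_Ioc
    intro u hu
    exact (caputo_beta_eqon (Ioc_subset_Icc_self hu)).symm
  simpa [IntegrableOn] using this.re

lemma caputo_beta_value {α : ℝ} (hα : 0 < α) (hα1 : α < 1) :
    ∫ u in (0:ℝ)..1, u ^ (-α) * (1-u) ^ (α-1) = Real.Gamma (1-α) * Real.Gamma α := by
  have h := Complex.Gamma_mul_Gamma_eq_betaIntegral (s := (1-α:ℝ)) (t := (α:ℝ))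
    (by simp [hα1]) (by simpa using hα)
  have h2 : ((1-α : ℝ) : ℂ) + (α : ℝ) = 1 := by push_cast; ring
  rw [h2, Complex.Gamma_one, one_mul, Complex.betaIntegral] at h
  have h3 : (∫ u in (0:ℝ)..1, (u:ℂ) ^ ((1-α:ℝ)-1 : ℂ) * (1-(u:ℂ)) ^ ((α:ℝ)-1 : ℂ))
      = ((∫ u in (0:ℝ)..1, u ^ (-α) * (1-u) ^ (α-1) : ℝ) : ℂ) := by
    rw [← intervalIntegral.integral_ofReal]
    apply intervalIntegral.integral_congr
    intro u hu
    rw [uIcc_of_le zero_le_one] at hu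
    exact (caputo_beta_eqon hu).symm
  rw [h3] at h
  have := congrArg Complex.re h
  rw [Complex.Gamma_ofReal, Complex.Gamma_ofReal] at this
  simpa using this.symm

lemma caputo_kernel_eqon {α s x : ℝ} (hsx : s < x) :
    EqOn (fun t => (x - t)^(α-1) * (t - s)^(-α))
      (fun t => (x-s)⁻¹ * (((x-s)⁻¹ * (t - s)) ^ (-α) * (1 - (x-s)⁻¹ * (t-s)) ^ (α-1)))
      (Icc s x) := by
  intro t ht
  have hc : 0 < x - s := by linarith
  have h1 : 1 - (x-s)⁻¹ * (t-s) = (x-s)⁻¹ * (x - t) := by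
    field_simp
    ring
  have h2 : ((x-s)⁻¹ * (t - s)) ^ (-α) = ((x-s)⁻¹) ^ (-α) * (t-s) ^ (-α) :=
    Real.mul_rpow (inv_nonneg.2 hc.le) (by linarith [ht.1])
  have h3 : ((x-s)⁻¹ * (x - t)) ^ (α-1) = ((x-s)⁻¹) ^ (α-1) * (x-t) ^ (α-1) :=
    Real.mul_rpow (inv_nonneg.2 hc.le) (by linarith [ht.2])
  have key : (x-s)⁻¹ * (((x-s)⁻¹) ^ (-α) * ((x-s)⁻¹) ^ (α-1)) = 1 := by
    rw [← Real.rpow_add (inv_pos.2 hc)]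
    have : -α + (α - 1) = -1 := by ring
    rw [this, Real.rpow_neg_one, inv_inv]
    exact inv_mul_cancel₀ hc.ne'
  simp only []
  rw [h1, h2, h3]
  linear_combination (-((t-s) ^ (-α) * (x-t) ^ (α-1))) * key

lemma caputo_kernel_intervalIntegrable {α s x : ℝ} (hα : 0 < α) (hα1 : α < 1) (hsx : s < x) :
    IntervalIntegrable (fun t => (x - t)^(α-1) * (t - s)^(-α)) volume s x := by
  have hc : 0 < x - s := by linarith
  have b1 := (caputo_beta_integrable hα hα1).comp_mul_left (c := (x-s)⁻¹)
  simp only [zero_div, one_div, inv_inv] at b1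
  have b2 := b1.comp_sub_right s
  have hx : x - s + s = x := by ring
  rw [zero_add, hx] at b2
  have b3 := b2.const_mul (x-s)⁻¹
  rw [intervalIntegrable_iff, uIoc_of_le hsx.le] at b3 ⊢
  exact b3.congr_fun (fun t ht => (caputo_kernel_eqon hsx (Ioc_subset_Icc_self ht)).symm)
    measurableSet_Ioc

lemma caputo_kernel_value {α s x : ℝ} (hα : 0 < α) (hα1 : α < 1) (hsx : s < x) :
    ∫ t in s..x, (x - t)^(α-1) * (t - s)^(-α) = Real.Gamma (1-α) * Real.Gamma α := by
  have hc : 0 < x - s := by linarith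
  rw [intervalIntegral.integral_congr (g :=
    fun t => (x-s)⁻¹ * (((x-s)⁻¹ * (t - s)) ^ (-α) * (1 - (x-s)⁻¹ * (t-s)) ^ (α-1)))
    (by rw [uIcc_of_le hsx.le]; exact caputo_kernel_eqon hsx)]
  rw [intervalIntegral.integral_const_mul]
  have hrw : ∀ t : ℝ, ((x-s)⁻¹ * (t - s)) ^ (-α) * (1 - (x-s)⁻¹ * (t-s)) ^ (α-1)
      = (fun u : ℝ => u ^ (-α) * (1-u) ^ (α-1)) ((x-s)⁻¹ * t + -((x-s)⁻¹ * s)) := by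
    intro t; simp only []; rw [mul_sub, sub_eq_add_neg]
  simp only [hrw]
  rw [intervalIntegral.integral_comp_mul_add (fun u : ℝ => u ^ (-α) * (1-u) ^ (α-1))
    (inv_ne_zero hc.ne') (-((x-s)⁻¹ * s))]
  have e0 : (x-s)⁻¹ * s + -((x-s)⁻¹ * s) = 0 := by ring
  have e1 : (x-s)⁻¹ * x + -((x-s)⁻¹ * s) = 1 := by
    field_simp
    ring
  rw [e0, e1, caputo_beta_value hα hα1, inv_inv, smul_eq_mul, ← mul_assoc,
    inv_mul_cancel₀ hc.ne', one_mul]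

lemma caputo_uIoc_subset_cb (y z : ℝ) : Ι y z ⊆ Metric.closedBall y (dist z y) := by
  intro u hu
  rw [Metric.mem_closedBall, Real.dist_eq, Real.dist_eq]
  rcases le_total y z with h | h
  · rw [uIoc_of_le h] at hu
    rw [abs_of_nonneg (by linarith [hu.1.le] : (0:ℝ) ≤ u - y),
      abs_of_nonneg (by linarith : (0:ℝ) ≤ z - y)]
    linarith [hu.2]
  · rw [uIoc_of_ge h] at hu
    rw [abs_of_nonpos (by linarith [hu.2] : u - y ≤ 0),
      abs_of_nonpos (by linarith : z - y ≤ 0)]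
    linarith [hu.1]

/-- Lebesgue differentiation: the indefinite integral of an integrable function is a.e.
differentiable with derivative the function itself. -/
lemma caputo_ftc_ae {g : ℝ → ℝ} (hg : Integrable g volume) :
    ∀ᵐ y : ℝ, HasDerivAt (fun z => ∫ t in (0:ℝ)..z, g t) (g y) y := by
  filter_upwards [IsUnifLocDoublingMeasure.ae_tendsto_average_norm_sub volume
    hg.locallyIntegrable 1] with y hy
  have havg : Tendsto (fun z : ℝ => ⨍ u in Metric.closedBall y (dist z y), ‖g u - g y‖)
      (𝓝[≠] y) (𝓝 0) := by
    apply hy (fun _ => y) (fun z => dist z y)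
    · apply tendsto_nhdsWithin_of_tendsto_nhds_of_eventually_within
      · have : Tendsto (fun z : ℝ => dist z y) (𝓝 y) (𝓝 (dist y y)) :=
          (continuous_id.dist continuous_const).tendsto y
        simpa using this.mono_left nhdsWithin_le_nhds
      · filter_upwards [self_mem_nhdsWithin] with z hz
        exact dist_pos.2 hz
    · filter_upwards with z
      simp only [Metric.mem_closedBall, dist_self, one_mul]
      exact dist_nonneg
  have h2 : Tendsto (fun z : ℝ => 2 * ⨍ u in Metric.closedBall y (dist z y), ‖g u - g y‖)
      (𝓝[≠] y) (𝓝 0) := by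
    simpa using havg.const_mul 2
  rw [hasDerivAt_iff_tendsto_slope, tendsto_iff_norm_sub_tendsto_zero]
  apply squeeze_zero_norm' _ h2
  filter_upwards [self_mem_nhdsWithin] with z hz
  have hzy : z ≠ y := hz
  have hr : 0 < dist z y := dist_pos.2 hzy
  have hfz : (∫ t in (0:ℝ)..z, g t) - ∫ t in (0:ℝ)..y, g t = ∫ t in y..z, g t :=
    intervalIntegral.integral_interval_sub_left hg.intervalIntegrable hg.intervalIntegrable
  have e : slope (fun z => ∫ t in (0:ℝ)..z, g t) y z - g y
      = (∫ t in y..z, (g t - g y)) / (z - y) := by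
    rw [slope_def_field, intervalIntegral.integral_sub hg.intervalIntegrable
      intervalIntegrable_const, hfz, intervalIntegral.integral_const]
    field_simp [sub_ne_zero.2 hzy]
    rw [smul_eq_mul]
  have hint : IntegrableOn (fun u => ‖g u - g y‖) (Metric.closedBall y (dist z y)) volume :=
    (hg.integrableOn.sub (integrableOn_const measure_closedBall_lt_top.ne)).norm
  have key : ‖slope (fun z => ∫ t in (0:ℝ)..z, g t) y z - g y‖
      ≤ 2 * ⨍ u in Metric.closedBall y (dist z y), ‖g u - g y‖ := by
    rw [e]
    have hd : ‖(∫ t in y..z, (g t - g y)) / (z - y)‖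
        = ‖∫ t in y..z, (g t - g y)‖ / dist z y := by
      rw [norm_div, Real.dist_eq, ← Real.norm_eq_abs]
    rw [hd]
    have step1 : ‖∫ t in y..z, (g t - g y)‖ ≤ ∫ u in Ι y z, ‖g u - g y‖ :=
      intervalIntegral.norm_integral_le_integral_norm_uIoc
    have step2 : (∫ u in Ι y z, ‖g u - g y‖)
        ≤ ∫ u in Metric.closedBall y (dist z y), ‖g u - g y‖ :=
      setIntegral_mono_set hint (Eventually.of_forall fun u => norm_nonneg _)
        (HasSubset.Subset.eventuallyLE (caputo_uIoc_subset_cb y z))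
    have step3 : (∫ u in Metric.closedBall y (dist z y), ‖g u - g y‖)
        = (2 * dist z y) * ⨍ u in Metric.closedBall y (dist z y), ‖g u - g y‖ := by
      rw [setAverage_eq, Real.volume_real_closedBall (by positivity),
        smul_eq_mul, ← mul_assoc, mul_inv_cancel₀ (by positivity), one_mul]
    calc ‖∫ t in y..z, (g t - g y)‖ / dist z y
        ≤ (∫ u in Metric.closedBall y (dist z y), ‖g u - g y‖) / dist z y := by
          gcongr
          exact step1.trans step2
      _ = 2 * ⨍ u in Metric.closedBall y (dist z y), ‖g u - g y‖ := by
          rw [step3]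
          field_simp
  simpa using key

/-- Semigroup property `Iᵅ (I^{1-α} ψ) = I¹ ψ` on `[0,1]`. -/
lemma caputo_semigroup {α : ℝ} (hα : 0 < α) (hα1 : α < 1) {φ : ℝ → ℝ}
    (hm : StronglyMeasurable φ) (hφ : IntegrableOn φ (Ioo 0 1)) {x : ℝ}
    (hx : x ∈ Icc (0:ℝ) 1) :
    RL α (RL (1-α) φ) x = ∫ s in Ioo (0:ℝ) x, φ s := by
  have hx0 : (0:ℝ) ≤ x := hx.1
  have hx1 : x ≤ 1 := hx.2
  set Γa := Real.Gamma α with hΓa_def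
  set Γb := Real.Gamma (1-α) with hΓb_def
  have hΓa : Γa ≠ 0 := (Real.Gamma_pos_of_pos hα).ne'
  have hΓb : Γb ≠ 0 := (Real.Gamma_pos_of_pos (by linarith)).ne'
  have hane : α ≠ 0 := hα.ne'
  have hbne : 1 - α ≠ 0 := by intro h; apply hα1.ne; linarith
  set B := Γb * Γa with hB_def
  set K : ℝ × ℝ → ℝ := fun p => (x - p.1)^(α-1) * ((p.1 - p.2)^(-α) * φ p.2) with hK_def
  set S : Set (ℝ × ℝ) := {p | 0 < p.2 ∧ p.2 < p.1 ∧ p.1 < x} with hS_def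
  have hS : MeasurableSet S :=
    (measurableSet_lt measurable_const measurable_snd).inter
      ((measurableSet_lt measurable_snd measurable_fst).inter
        (measurableSet_lt measurable_fst measurable_const))
  set F : ℝ × ℝ → ℝ := S.indicator K with hF_def
  have hφm : Measurable φ := hm.measurable
  have hKm : Measurable K := by
    rw [hK_def]; fun_prop
  have hFm : Measurable F := hKm.indicator hS
  have hslice : ∀ s ∈ Ioo (0:ℝ) x, (fun t => F (t, s))
      = (Ioo s x).indicator (fun t => ((x-t)^(α-1) * (t-s)^(-α)) * φ s) := by
    intro s hs
    funext t
    by_cases ht : t ∈ Ioo s x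
    · rw [indicator_of_mem ht,
        show F (t,s) = K (t,s) from indicator_of_mem
          (show (t,s) ∈ S from ⟨hs.1, ht.1, ht.2⟩) K]
      show (x - t)^(α-1) * ((t - s)^(-α) * φ s) = _
      ring
    · rw [indicator_of_notMem ht, hF_def, indicator_of_notMem]
      intro hmem
      exact ht ⟨hmem.2.1, hmem.2.2⟩
  have hslice0 : ∀ s : ℝ, s ∉ Ioo (0:ℝ) x → (fun t => F (t, s)) = fun _ => 0 := by
    intro s hs
    funext t
    apply indicator_of_notMem
    intro hmem
    exact hs ⟨hmem.1, lt_trans hmem.2.1 hmem.2.2⟩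
  have hker : ∀ s ∈ Ioo (0:ℝ) x,
      IntegrableOn (fun t => (x-t)^(α-1) * (t-s)^(-α)) (Ioo s x) volume := by
    intro s hs
    have h := caputo_kernel_intervalIntegrable (s := s) (x := x) hα hα1 hs.2
    rw [intervalIntegrable_iff, uIoc_of_le hs.2.le] at h
    exact h.mono_set Ioo_subset_Ioc_self
  have hval : ∀ s ∈ Ioo (0:ℝ) x,
      ∫ t in Ioo s x, (x-t)^(α-1) * (t-s)^(-α) = B := by
    intro s hs
    rw [← integral_Ioc_eq_integral_Ioo, ← intervalIntegral.integral_of_le hs.2.le]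
    exact caputo_kernel_value hα hα1 hs.2
  have hFint : Integrable F (volume.prod volume) := by
    rw [integrable_prod_iff' hFm.aestronglyMeasurable]
    constructor
    · apply Filter.Eventually.of_forall
      intro s
      by_cases hs : s ∈ Ioo (0:ℝ) x
      · rw [hslice s hs, integrable_indicator_iff measurableSet_Ioo]
        exact (hker s hs).mul_const _
      · rw [hslice0 s hs]
        exact integrable_zero _ _ _
    · have heq : (fun s => ∫ t, ‖F (t, s)‖)
          = (Ioo (0:ℝ) x).indicator (fun s => B * |φ s|) := by
        funext s
        by_cases hs : s ∈ Ioo (0:ℝ) x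
        · rw [indicator_of_mem hs]
          have h1 : (fun t => ‖F (t, s)‖) = (Ioo s x).indicator
              (fun t => ‖((x-t)^(α-1) * (t-s)^(-α)) * φ s‖) := by
            funext t
            rw [show F (t,s) = _ from congrFun (hslice s hs) t,
              norm_indicator_eq_indicator_norm]
          rw [h1, integral_indicator measurableSet_Ioo]
          have h2 : ∫ t in Ioo s x, ‖((x-t)^(α-1) * (t-s)^(-α)) * φ s‖
              = ∫ t in Ioo s x, ((x-t)^(α-1) * (t-s)^(-α)) * |φ s| := by
            apply setIntegral_congr_fun measurableSet_Ioo
            intro t ht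
            dsimp only
            rw [Real.norm_eq_abs, abs_mul, abs_mul,
              abs_of_nonneg (Real.rpow_nonneg (by linarith [ht.2] : (0:ℝ) ≤ x - t) _),
              abs_of_nonneg (Real.rpow_nonneg (by linarith [ht.1] : (0:ℝ) ≤ t - s) _)]
          rw [h2, integral_mul_const, hval s hs]
        · rw [indicator_of_notMem hs]
          have : ∀ t : ℝ, F (t, s) = 0 := fun t => congrFun (hslice0 s hs) t
          simp [this]
      rw [heq, integrable_indicator_iff measurableSet_Ioo]
      exact ((hφ.mono_set (Ioo_subset_Ioo le_rfl hx1)).abs.const_mul B)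
  have inner : ∀ t ∈ Ioo (0:ℝ) x,
      (x-t)^(α-1) * RL (1-α) φ t = Γb⁻¹ * ∫ s, F (t, s) := by
    intro t ht
    have htx : (fun s => F (t, s)) = (Ioo 0 t).indicator (fun s => K (t, s)) := by
      funext s
      by_cases hs : s ∈ Ioo (0:ℝ) t
      · rw [indicator_of_mem hs,
          show F (t,s) = K (t,s) from indicator_of_mem
            (show (t,s) ∈ S from ⟨hs.1, hs.2, ht.2⟩) K]
      · rw [indicator_of_notMem hs, hF_def, indicator_of_notMem]
        intro hmem
        exact hs ⟨hmem.1, hmem.2.1⟩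
    have hRL : RL (1-α) φ t = Γb⁻¹ * ∫ s in Ioo (0:ℝ) t, (t - s)^(-α) * φ s := by
      rw [RL, if_neg hbne, intervalIntegral.integral_of_le ht.1.le,
        integral_Ioc_eq_integral_Ioo]
      norm_num
      exact Or.inl hΓb_def.symm
    rw [hRL, htx, integral_indicator measurableSet_Ioo]
    have : ∫ s in Ioo (0:ℝ) t, K (t, s)
        = (x-t)^(α-1) * ∫ s in Ioo (0:ℝ) t, (t - s)^(-α) * φ s := by
      simp only [hK_def]
      rw [integral_const_mul]
    rw [this]
    ring
  have step1 : RL α (RL (1-α) φ) x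
      = Γa⁻¹ * ∫ t in Ioo (0:ℝ) x, (x-t)^(α-1) * RL (1-α) φ t := by
    rw [RL, if_neg hane, intervalIntegral.integral_of_le hx0, integral_Ioc_eq_integral_Ioo]
  have step2 : ∫ t in Ioo (0:ℝ) x, (x-t)^(α-1) * RL (1-α) φ t
      = Γb⁻¹ * ∫ t in Ioo (0:ℝ) x, ∫ s, F (t, s) := by
    rw [← integral_const_mul]
    exact setIntegral_congr_fun measurableSet_Ioo inner
  have step3 : ∫ t in Ioo (0:ℝ) x, (∫ s, F (t, s)) = ∫ t, ∫ s, F (t, s) := by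
    apply setIntegral_eq_integral_of_forall_compl_eq_zero
    intro t ht
    have : ∀ s : ℝ, F (t, s) = 0 := by
      intro s
      apply indicator_of_notMem
      intro hmem
      exact ht ⟨lt_trans hmem.1 hmem.2.1, hmem.2.2⟩
    simp [this]
  have step4 : ∫ t, (∫ s, F (t, s)) = ∫ s, ∫ t, F (t, s) :=
    integral_integral_swap hFint
  have step5 : ∫ s, (∫ t, F (t, s)) = ∫ s in Ioo (0:ℝ) x, B * φ s := by
    rw [show (∫ s, (∫ t, F (t, s))) = ∫ s in Ioo (0:ℝ) x, ∫ t, F (t, s) from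
      (setIntegral_eq_integral_of_forall_compl_eq_zero (fun s hs => by
        rw [hslice0 s hs]; simp)).symm]
    apply setIntegral_congr_fun measurableSet_Ioo
    intro s hs
    dsimp only
    rw [hslice s hs, integral_indicator measurableSet_Ioo, integral_mul_const, hval s hs]
  rw [step1, step2, step3, step4, step5, integral_const_mul]
  field_simp [hB_def]
  ring

end Auxiliary

/-- 1st Fundamental Theorem of FC for the Caputo derivative `D^α_C g = I^{1-α} (g')`:
    if `f ∈ X_FT = I^{1-α}(L¹(0,1))`, then `D^α_C (Iᵅ f) = f` a.e. on `[0,1]`. -/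
theorem caputo_left_inverse (α : ℝ) (hα : 0 < α) (hα1 : α ≤ 1) (f φ : ℝ → ℝ)
    (hφ : IntegrableOn φ (Ioo (0:ℝ) 1))
    (hf : ∀ x ∈ Icc (0:ℝ) 1, f x = RL (1 - α) φ x) :
    ∀ᵐ x ∂(volume.restrict (Icc (0:ℝ) 1)),
      RL (1 - α) (fun y => deriv (fun z => RL α f z) y) x = f x := by
  -- replace `φ` by a strongly measurable representative `ψ`
  obtain ⟨ψ, hψm, hψe⟩ := hφ.aestronglyMeasurable
  have hψint : IntegrableOn ψ (Ioo (0:ℝ) 1) := (integrable_congr hψe).mp hφ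
  set g : ℝ → ℝ := (Ioo (0:ℝ) 1).indicator ψ with hg_def
  have hgint : Integrable g volume := by
    rw [hg_def, integrable_indicator_iff measurableSet_Ioo]
    exact hψint
  set G : ℝ → ℝ := fun z => ∫ t in (0:ℝ)..z, g t with hG_def
  have hG : ∀ᵐ y : ℝ, HasDerivAt G (g y) y := caputo_ftc_ae hgint
  have hφψ : ∀ᵐ s : ℝ ∂volume, s ∈ Ioo (0:ℝ) 1 → φ s = ψ s :=
    (ae_restrict_iff' measurableSet_Ioo).mp hψe
  have hne1 : ∀ᵐ t : ℝ ∂volume, t ≠ 1 := by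
    have h0 : volume ({1} : Set ℝ) = 0 := measure_singleton 1
    rw [ae_iff]
    convert h0 using 2
    ext t; simp
  have hne0 : ∀ᵐ t : ℝ ∂volume, t ≠ 0 := by
    have h0 : volume ({0} : Set ℝ) = 0 := measure_singleton 0
    rw [ae_iff]
    convert h0 using 2
    ext t; simp
  rcases eq_or_lt_of_le hα1 with h1α | hlt
  · -- case α = 1
    subst h1α
    have hone : (1:ℝ) - 1 = 0 := sub_self 1
    have hfφ : ∀ t ∈ Icc (0:ℝ) 1, f t = φ t := by
      intro t ht
      rw [hf t ht, hone, RL, if_pos rfl]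
    have hfG : ∀ z ∈ Icc (0:ℝ) 1, RL 1 f z = G z := by
      intro z hz
      rw [RL, if_neg one_ne_zero, Real.Gamma_one, inv_one, one_mul,
        intervalIntegral.integral_of_le hz.1, integral_Ioc_eq_integral_Ioo]
      have hGz : G z = ∫ t in Ioo (0:ℝ) z, g t := by
        rw [hG_def]
        dsimp only
        rw [intervalIntegral.integral_of_le hz.1, integral_Ioc_eq_integral_Ioo]
      rw [hGz]
      apply setIntegral_congr_ae measurableSet_Ioo
      filter_upwards [hφψ] with t hts hmem
      have htIoo : t ∈ Ioo (0:ℝ) 1 := Ioo_subset_Ioo le_rfl hz.2 hmem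
      rw [sub_self, Real.rpow_zero, one_mul,
        hfφ t ⟨hmem.1.le, (hmem.2.le.trans hz.2)⟩, hts htIoo]
      exact (indicator_of_mem htIoo ψ).symm
    have hd : ∀ᵐ y : ℝ ∂volume, y ∈ Ioo (0:ℝ) 1 → deriv (fun z => RL 1 f z) y = ψ y := by
      filter_upwards [hG] with y hy hmem
      have heq : (fun z => RL 1 f z) =ᶠ[nhds y] G := by
        filter_upwards [Ioo_mem_nhds hmem.1 hmem.2] with z hz
        exact hfG z ⟨hz.1.le, hz.2.le⟩
      rw [heq.deriv_eq, hy.deriv]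
      exact indicator_of_mem hmem ψ
    filter_upwards [ae_restrict_mem measurableSet_Icc, ae_restrict_of_ae hd,
      ae_restrict_of_ae hφψ, ae_restrict_of_ae hne1, ae_restrict_of_ae hne0]
      with x hx hdx hpsix h1x h0x
    have hxIoo : x ∈ Ioo (0:ℝ) 1 :=
      ⟨lt_of_le_of_ne hx.1 (Ne.symm h0x), lt_of_le_of_ne hx.2 h1x⟩
    rw [hone, RL, if_pos rfl]
    rw [hdx hxIoo, ← hpsix hxIoo, hfφ x hx]
  · -- case α < 1
    have hbne : (1:ℝ) - α ≠ 0 := by intro h; exact hlt.ne (by linarith)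
    have hfψ : ∀ t ∈ Icc (0:ℝ) 1, f t = RL (1-α) ψ t := by
      intro t ht
      rw [hf t ht, RL, RL, if_neg hbne, if_neg hbne]
      congr 1
      apply intervalIntegral.integral_congr_ae
      filter_upwards [hφψ, hne1] with s hs hne hmem
      rw [uIoc_of_le ht.1] at hmem
      have hsIoo : s ∈ Ioo (0:ℝ) 1 := ⟨hmem.1, lt_of_le_of_ne (hmem.2.trans ht.2) hne⟩
      rw [hs hsIoo]
    have hfG : ∀ z ∈ Icc (0:ℝ) 1, RL α f z = G z := by
      intro z hz
      have h1' : RL α f z = RL α (RL (1-α) ψ) z := by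
        rw [RL, RL, if_neg hα.ne', if_neg hα.ne']
        congr 1
        apply intervalIntegral.integral_congr
        intro t ht
        rw [uIcc_of_le hz.1] at ht
        dsimp only
        rw [hfψ t ⟨ht.1, ht.2.trans hz.2⟩]
      rw [h1', caputo_semigroup hα hlt hψm hψint hz]
      have hGz : G z = ∫ t in Ioo (0:ℝ) z, g t := by
        rw [hG_def]
        dsimp only
        rw [intervalIntegral.integral_of_le hz.1, integral_Ioc_eq_integral_Ioo]
      rw [hGz]
      apply setIntegral_congr_fun measurableSet_Ioo
      intro s hs
      exact (indicator_of_mem (Ioo_subset_Ioo le_rfl hz.2 hs) ψ).symm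
    have hd : ∀ᵐ y : ℝ ∂volume, y ∈ Ioo (0:ℝ) 1 → deriv (fun z => RL α f z) y = ψ y := by
      filter_upwards [hG] with y hy hmem
      have heq : (fun z => RL α f z) =ᶠ[nhds y] G := by
        filter_upwards [Ioo_mem_nhds hmem.1 hmem.2] with z hz
        exact hfG z ⟨hz.1.le, hz.2.le⟩
      rw [heq.deriv_eq, hy.deriv]
      exact indicator_of_mem hmem ψ
    filter_upwards [ae_restrict_mem measurableSet_Icc] with x hx
    rw [hf x hx, RL, RL, if_neg hbne, if_neg hbne]
    congr 1
    apply intervalIntegral.integral_congr_ae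
    filter_upwards [hd, hφψ, hne1] with t ht hts hne hmem
    rw [uIoc_of_le hx.1] at hmem
    have htIoo : t ∈ Ioo (0:ℝ) 1 := ⟨hmem.1, lt_of_le_of_ne (hmem.2.trans hx.2) hne⟩
    rw [ht htIoo, hts htIoo]
end

section
/- For 0 < α ≤ 1 and any type γ₁ with 0 ≤ γ₁ ≤ 1 - α, the Hilfer fractional derivative D^{α,γ₁}_H g = I^{γ₁} (d/dx) I^{1-α-γ₁} g is a left inverse of the Riemann–Liouville fractional integral Iᵅ on the space X_FT = I^{1-α}(L¹(0,1)): for every f ∈ X_FT, (D^{α,γ₁}_H (Iᵅ f))(x) = f(x) a.e. on [0,1]. -/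
open MeasureTheory Set intervalIntegral Filter Metric

lemma rbeta_eq (a b : ℝ) (ha : 0 < a) (hb : 0 < b) :
    ∫ u in (0:ℝ)..1, u ^ (a-1) * (1-u) ^ (b-1)
      = Real.Gamma a * Real.Gamma b / Real.Gamma (a+b) := by
  have h := Complex.Gamma_mul_Gamma_eq_betaIntegral (s := (a:ℂ)) (t := (b:ℂ))
    (by simpa using ha) (by simpa using hb)
  have hI : Complex.betaIntegral (a:ℂ) (b:ℂ)
      = ((∫ u in (0:ℝ)..1, u ^ (a-1) * (1-u) ^ (b-1) : ℝ) : ℂ) := by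
    rw [Complex.betaIntegral, ← intervalIntegral.integral_ofReal]
    apply intervalIntegral.integral_congr
    intro u hu
    rw [uIcc_of_le (by norm_num : (0:ℝ) ≤ 1)] at hu
    show (u:ℂ) ^ ((a:ℂ)-1) * (1-(u:ℂ)) ^ ((b:ℂ)-1) = ((u ^ (a-1) * (1-u) ^ (b-1) : ℝ) : ℂ)
    rw [show ((a:ℂ)-1) = ((a-1:ℝ):ℂ) by push_cast; ring,
      show ((b:ℂ)-1) = ((b-1:ℝ):ℂ) by push_cast; ring,
      show (1-(u:ℂ)) = ((1-u:ℝ):ℂ) by push_cast; ring,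
      ← Complex.ofReal_cpow hu.1,
      ← Complex.ofReal_cpow (by linarith [hu.2] : (0:ℝ) ≤ 1-u), ← Complex.ofReal_mul]
  rw [hI, ← Complex.ofReal_add, Complex.Gamma_ofReal, Complex.Gamma_ofReal,
    Complex.Gamma_ofReal, ← Complex.ofReal_mul, ← Complex.ofReal_mul] at h
  have := Complex.ofReal_inj.mp h
  have hG : Real.Gamma (a+b) ≠ 0 := (Real.Gamma_pos_of_pos (by linarith)).ne'
  field_simp
  linarith [this]

lemma rbeta_integrable (a b : ℝ) (ha : 0 < a) (hb : 0 < b) :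
    IntervalIntegrable (fun u : ℝ => u ^ (a-1) * (1-u) ^ (b-1)) volume 0 1 := by
  have h1 : IntervalIntegrable (fun u : ℝ => u ^ (a-1) * (1-u) ^ (b-1)) volume 0 (1/2) := by
    apply (intervalIntegrable_rpow' (by linarith : (-1:ℝ) < a - 1)).mul_continuousOn
    apply ContinuousOn.rpow_const (by fun_prop)
    intro u hu
    rw [uIcc_of_le (by norm_num : (0:ℝ) ≤ 1/2)] at hu
    left; intro h; nlinarith [hu.2]
  have h2 : IntervalIntegrable (fun u : ℝ => (1-u) ^ (b-1) * u ^ (a-1)) volume (1/2) 1 := by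
    have := ((intervalIntegrable_rpow' (by linarith : (-1:ℝ) < b - 1)).comp_sub_left
        (a := 0) (b := 1/2) 1)
    norm_num at this
    apply this.symm.mul_continuousOn
    apply ContinuousOn.rpow_const (by fun_prop)
    intro u hu
    rw [uIcc_of_le (by norm_num : (1:ℝ)/2 ≤ 1)] at hu
    left; intro h; nlinarith [hu.1]
  have h2' : IntervalIntegrable (fun u : ℝ => u ^ (a-1) * (1-u) ^ (b-1)) volume (1/2) 1 := by
    simpa [mul_comm] using h2
  exact h1.trans h2'

lemma kernel_intervalIntegrable (a b : ℝ) (ha : 0 < a) (hb : 0 < b) {s x : ℝ} (hsx : s < x) :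
    IntervalIntegrable (fun t : ℝ => (x-t) ^ (a-1) * (t-s) ^ (b-1)) volume s x := by
  set m := (s + x)/2 with hm
  have hsm : s < m := by rw [hm]; linarith
  have hmx : m < x := by rw [hm]; linarith
  have p1 : IntervalIntegrable (fun t : ℝ => (t-s) ^ (b-1) * (x-t) ^ (a-1)) volume s m := by
    have h := (intervalIntegrable_rpow' (show (-1:ℝ) < b-1 by linarith)
      (a := 0) (b := m - s)).comp_add_right (-s)
    have h' : IntervalIntegrable (fun t : ℝ => (t-s) ^ (b-1)) volume s m := by
      have e1 : (0:ℝ) - -s = s := by ring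
      have e2 : m - s - -s = m := by ring
      rw [e1, e2] at h
      simpa [sub_eq_add_neg] using h
    apply h'.mul_continuousOn
    apply ContinuousOn.rpow_const (by fun_prop)
    intro t ht
    rw [uIcc_of_le hsm.le] at ht
    left; intro hxe; linarith [ht.2]
  have p2 : IntervalIntegrable (fun t : ℝ => (x-t) ^ (a-1) * (t-s) ^ (b-1)) volume m x := by
    have h := (intervalIntegrable_rpow' (show (-1:ℝ) < a-1 by linarith)
      (a := x - m) (b := 0)).comp_sub_left x
    have h' : IntervalIntegrable (fun t : ℝ => (x-t) ^ (a-1)) volume m x := by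
      have e1 : x - (x - m) = m := by ring
      have e2 : x - (0:ℝ) = x := by ring
      rwa [e1, e2] at h
    apply h'.mul_continuousOn
    apply ContinuousOn.rpow_const (by fun_prop)
    intro t ht
    rw [uIcc_of_le hmx.le] at ht
    left; intro hxe; linarith [ht.1]
  have p1' : IntervalIntegrable (fun t : ℝ => (x-t) ^ (a-1) * (t-s) ^ (b-1)) volume s m := by
    simpa [mul_comm] using p1
  exact p1'.trans p2

lemma kernel_integrableOn (a b : ℝ) (ha : 0 < a) (hb : 0 < b) {s x : ℝ} (hsx : s < x) :
    IntegrableOn (fun t : ℝ => (x-t) ^ (a-1) * (t-s) ^ (b-1)) (Ioo s x) volume :=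
  (intervalIntegrable_iff_integrableOn_Ioo_of_le hsx.le).mp
    (kernel_intervalIntegrable a b ha hb hsx)

lemma kernel_integral (a b : ℝ) (ha : 0 < a) (hb : 0 < b) {s x : ℝ} (hsx : s < x) :
    ∫ t in Ioo s x, (x-t) ^ (a-1) * (t-s) ^ (b-1)
      = (x-s) ^ (a+b-1) * (Real.Gamma a * Real.Gamma b / Real.Gamma (a+b)) := by
  set c := x - s with hc
  have hc0 : 0 < c := by rw [hc]; linarith
  have step0 : ∫ t in Ioo s x, (x-t) ^ (a-1) * (t-s) ^ (b-1)
      = ∫ t in s..x, (x-t) ^ (a-1) * (t-s) ^ (b-1) := by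
    rw [intervalIntegral.integral_of_le hsx.le, integral_Ioc_eq_integral_Ioo]
  have step1 : (∫ t in s..x, (x-t) ^ (a-1) * (t-s) ^ (b-1))
      = ∫ u in (0:ℝ)..c, (x - (s+u)) ^ (a-1) * ((s+u)-s) ^ (b-1) := by
    rw [intervalIntegral.integral_comp_add_left
      (fun t => (x-t) ^ (a-1) * (t-s) ^ (b-1)) s]
    norm_num [hc]
  have step2 : (∫ u in (0:ℝ)..c, (x - (s+u)) ^ (a-1) * ((s+u)-s) ^ (b-1))
      = c • ∫ v in (0:ℝ)..1, (x - (s+c*v)) ^ (a-1) * ((s+c*v)-s) ^ (b-1) := by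
    rw [intervalIntegral.integral_comp_mul_left
      (fun u => (x - (s+u)) ^ (a-1) * ((s+u)-s) ^ (b-1)) hc0.ne']
    rw [mul_zero, mul_one, smul_smul, mul_inv_cancel₀ hc0.ne', one_smul]
  have step3 : (∫ v in (0:ℝ)..1, (x - (s+c*v)) ^ (a-1) * ((s+c*v)-s) ^ (b-1))
      = c ^ (a-1) * c ^ (b-1) * ∫ v in (0:ℝ)..1, v ^ (b-1) * (1-v) ^ (a-1) := by
    rw [← intervalIntegral.integral_const_mul]
    apply intervalIntegral.integral_congr
    intro v hv
    rw [uIcc_of_le (by norm_num : (0:ℝ) ≤ 1)] at hv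
    show (x - (s + c*v)) ^ (a-1) * (s + c*v - s) ^ (b-1)
      = c ^ (a-1) * c ^ (b-1) * (v ^ (b-1) * (1-v) ^ (a-1))
    have e1 : x - (s + c*v) = c * (1 - v) := by rw [hc]; ring
    have e2 : s + c*v - s = c * v := by ring
    rw [e1, e2, Real.mul_rpow hc0.le (by linarith [hv.2]),
      Real.mul_rpow hc0.le hv.1]
    ring
  rw [step0, step1, step2, step3, rbeta_eq b a hb ha, smul_eq_mul]
  rw [show Real.Gamma b * Real.Gamma a / Real.Gamma (b+a)
      = Real.Gamma a * Real.Gamma b / Real.Gamma (a+b) by rw [mul_comm, add_comm]]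
  rw [show c * (c ^ (a-1) * c ^ (b-1) * (Real.Gamma a * Real.Gamma b / Real.Gamma (a+b)))
      = (c * (c ^ (a-1) * c ^ (b-1))) * (Real.Gamma a * Real.Gamma b / Real.Gamma (a+b)) by ring]
  congr 1
  have e3 : c * (c ^ (a-1) * c ^ (b-1)) = c ^ (1:ℝ) * (c ^ (a-1) * c ^ (b-1)) := by
    rw [Real.rpow_one]
  rw [e3, ← Real.rpow_add hc0, ← Real.rpow_add hc0]
  congr 1
  ring

lemma RL_of_ne {c : ℝ} (hc : c ≠ 0) (f : ℝ → ℝ) (x : ℝ) :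
    RL c f x = (Real.Gamma c)⁻¹ * ∫ t in (0:ℝ)..x, (x - t) ^ (c - 1) * f t := by
  simp only [RL, if_neg hc]

lemma RL_semigroup (a b : ℝ) (ha : 0 < a) (hb : 0 < b) (ψ : ℝ → ℝ) (hm : Measurable ψ)
    {x : ℝ} (hx : 0 < x) (hψ : IntegrableOn ψ (Ioc 0 x))
    (hw : IntegrableOn (fun s => (x-s) ^ (a+b-1) * ψ s) (Ioc 0 x)) :
    RL a (RL b ψ) x = RL (a+b) ψ x := by
  set B := Real.Gamma a * Real.Gamma b / Real.Gamma (a+b) with hB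
  set E : Set (ℝ × ℝ) := {p : ℝ × ℝ | 0 < p.2 ∧ p.2 < p.1 ∧ p.1 < x} with hE
  have hEm : MeasurableSet E := by
    apply MeasurableSet.inter (measurableSet_lt measurable_const measurable_snd)
    exact MeasurableSet.inter (measurableSet_lt measurable_snd measurable_fst)
      (measurableSet_lt measurable_fst measurable_const)
  set F : ℝ × ℝ → ℝ :=
    E.indicator (fun p => (x - p.1) ^ (a-1) * ((p.1 - p.2) ^ (b-1) * ψ p.2)) with hF
  have hFm : Measurable F := by
    apply Measurable.indicator _ hEm
    fun_prop
  -- fiber descriptions (in t, for fixed s)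
  have fiber_t : ∀ s ∈ Ioo 0 x, (fun t => F (t, s))
      = (Ioo s x).indicator (fun t => (x - t) ^ (a-1) * ((t - s) ^ (b-1) * ψ s)) := by
    intro s hs
    funext t
    by_cases h : t ∈ Ioo s x
    · rw [indicator_of_mem h, hF, indicator_of_mem (by exact ⟨hs.1, h.1, h.2⟩ : (t,s) ∈ E)]
    · rw [indicator_of_notMem h, hF, indicator_of_notMem]
      intro hmem
      exact h ⟨hmem.2.1, hmem.2.2⟩
  have fiber_t0 : ∀ s, s ∉ Ioo 0 x → (fun t => F (t, s)) = fun _ => (0:ℝ) := by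
    intro s hs
    funext t
    rw [hF, indicator_of_notMem]
    intro hmem
    exact hs ⟨hmem.1, hmem.2.1.trans hmem.2.2⟩
  -- fiber description (in s, for fixed t)
  have fiber_s : ∀ t ∈ Ioo 0 x, (fun s => F (t, s))
      = (Ioo 0 t).indicator (fun s => (x - t) ^ (a-1) * ((t - s) ^ (b-1) * ψ s)) := by
    intro t ht
    funext s
    by_cases h : s ∈ Ioo 0 t
    · rw [indicator_of_mem h, hF, indicator_of_mem (by exact ⟨h.1, h.2, ht.2⟩ : (t,s) ∈ E)]
    · rw [indicator_of_notMem h, hF, indicator_of_notMem]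
      intro hmem
      exact h ⟨hmem.1, hmem.2.1⟩
  have fiber_s0 : ∀ t, t ∉ Ioo 0 x → (fun s => F (t, s)) = fun _ => (0:ℝ) := by
    intro t ht
    funext s
    rw [hF, indicator_of_notMem]
    intro hmem
    exact ht ⟨hmem.1.trans hmem.2.1, hmem.2.2⟩
  -- integrability of F
  have hFi : Integrable F (volume.prod volume) := by
    rw [MeasureTheory.integrable_prod_iff' hFm.aestronglyMeasurable]
    constructor
    · apply Filter.Eventually.of_forall
      intro s
      by_cases hs : s ∈ Ioo 0 x
      · rw [fiber_t s hs, integrable_indicator_iff measurableSet_Ioo]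
        exact IntegrableOn.congr_fun ((kernel_integrableOn a b ha hb hs.2).mul_const (ψ s))
          (fun t _ => by ring) measurableSet_Ioo
      · rw [fiber_t0 s hs]
        exact integrable_zero _ _ _
    · have key : (fun s => ∫ t, ‖F (t, s)‖)
          = (Ioo 0 x).indicator (fun s => ((x-s) ^ (a+b-1) * B) * ‖ψ s‖) := by
        funext s
        by_cases hs : s ∈ Ioo 0 x
        · rw [indicator_of_mem hs]
          have hnorm : (fun t => ‖F (t, s)‖)
              = (Ioo s x).indicator (fun t => ((x - t) ^ (a-1) * (t - s) ^ (b-1)) * ‖ψ s‖) := by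
            funext t
            have e : F (t, s) = (Ioo s x).indicator
                (fun t => (x - t) ^ (a-1) * ((t - s) ^ (b-1) * ψ s)) t :=
              congrFun (fiber_t s hs) t
            rw [e]
            by_cases ht : t ∈ Ioo s x
            · rw [norm_indicator_eq_indicator_norm, indicator_of_mem ht, indicator_of_mem ht]
              have h1 : (0:ℝ) ≤ (x - t) ^ (a-1) := Real.rpow_nonneg (by linarith [ht.2]) _
              have h2 : (0:ℝ) ≤ (t - s) ^ (b-1) := Real.rpow_nonneg (by linarith [ht.1]) _
              simp only [norm_mul, Real.norm_eq_abs, abs_of_nonneg h1, abs_of_nonneg h2]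
              ring
            · rw [norm_indicator_eq_indicator_norm, indicator_of_notMem ht,
                indicator_of_notMem ht]
          rw [hnorm, MeasureTheory.integral_indicator measurableSet_Ioo,
            MeasureTheory.integral_mul_const, kernel_integral a b ha hb hs.2]
        · rw [indicator_of_notMem hs]
          have hz : (fun t => ‖F (t, s)‖) = fun _ => (0:ℝ) := by
            funext t
            have e : F (t, s) = (0:ℝ) := congrFun (fiber_t0 s hs) t
            rw [e, norm_zero]
          rw [hz]
          simp
      rw [key, integrable_indicator_iff measurableSet_Ioo]
      have h1 : IntegrableOn (fun s => (x-s) ^ (a+b-1) * ψ s) (Ioo 0 x) volume :=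
        hw.mono_set Ioo_subset_Ioc_self
      apply IntegrableOn.congr_fun (h1.norm.mul_const B) _ measurableSet_Ioo
      intro s hs
      have h3 : (0:ℝ) ≤ (x - s) ^ (a+b-1) := Real.rpow_nonneg (by linarith [hs.2]) _
      simp only [norm_mul, Real.norm_eq_abs, abs_of_nonneg h3]
      ring
  -- unfold LHS
  have hGa : Real.Gamma a ≠ 0 := (Real.Gamma_pos_of_pos ha).ne'
  have hGb : Real.Gamma b ≠ 0 := (Real.Gamma_pos_of_pos hb).ne'
  have hGab : Real.Gamma (a+b) ≠ 0 := (Real.Gamma_pos_of_pos (by linarith)).ne'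
  have lhs1 : RL a (RL b ψ) x
      = (Real.Gamma a)⁻¹ * ((Real.Gamma b)⁻¹ * ∫ t, ∫ s, F (t, s)) := by
    rw [RL_of_ne ha.ne', intervalIntegral.integral_of_le hx.le,
      integral_Ioc_eq_integral_Ioo]
    congr 1
    have step : ∫ t in Ioo 0 x, (x - t) ^ (a-1) * RL b ψ t
        = ∫ t in Ioo 0 x, (Real.Gamma b)⁻¹ * ∫ s, F (t, s) := by
      apply MeasureTheory.setIntegral_congr_fun measurableSet_Ioo
      intro t ht
      show (x - t) ^ (a-1) * RL b ψ t = (Real.Gamma b)⁻¹ * ∫ s, F (t, s)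
      rw [RL_of_ne hb.ne', intervalIntegral.integral_of_le ht.1.le,
        integral_Ioc_eq_integral_Ioo, ← MeasureTheory.integral_indicator measurableSet_Ioo]
      have : (Ioo 0 t).indicator (fun s => (t - s) ^ (b-1) * ψ s)
          = fun s => ((x - t) ^ (a-1))⁻¹ * F (t, s) := by
        funext s
        have e : F (t, s) = (Ioo 0 t).indicator
            (fun s => (x - t) ^ (a-1) * ((t - s) ^ (b-1) * ψ s)) s := congrFun (fiber_s t ht) s
        rw [e]
        by_cases h : s ∈ Ioo 0 t
        · rw [indicator_of_mem h, indicator_of_mem h]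
          have hp : (0:ℝ) < (x - t) ^ (a-1) := Real.rpow_pos_of_pos (by linarith [ht.2]) _
          field_simp
        · rw [indicator_of_notMem h, indicator_of_notMem h, mul_zero]
      rw [this, MeasureTheory.integral_const_mul _ _]
      have hp : (0:ℝ) < (x - t) ^ (a-1) := Real.rpow_pos_of_pos (by linarith [ht.2]) _
      field_simp
    rw [step, MeasureTheory.integral_const_mul _ _]
    congr 1
    rw [← MeasureTheory.integral_indicator measurableSet_Ioo]
    congr 1
    funext t
    by_cases ht : t ∈ Ioo 0 x
    · rw [indicator_of_mem ht]
    · rw [indicator_of_notMem ht, fiber_s0 t ht]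
      simp
  -- swap and compute RHS
  have swap : ∫ t, ∫ s, F (t, s) = ∫ s, ∫ t, F (t, s) :=
    MeasureTheory.integral_integral_swap hFi
  have rhs1 : ∫ s, ∫ t, F (t, s)
      = ∫ s in Ioo 0 x, ((x - s) ^ (a+b-1) * B) * ψ s := by
    rw [← MeasureTheory.integral_indicator measurableSet_Ioo]
    congr 1
    funext s
    by_cases hs : s ∈ Ioo 0 x
    · rw [indicator_of_mem hs, fiber_t s hs, MeasureTheory.integral_indicator measurableSet_Ioo]
      have : ∫ t in Ioo s x, (x - t) ^ (a-1) * ((t - s) ^ (b-1) * ψ s)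
          = (∫ t in Ioo s x, (x - t) ^ (a-1) * (t - s) ^ (b-1)) * ψ s := by
        rw [← MeasureTheory.integral_mul_const]
        apply MeasureTheory.setIntegral_congr_fun measurableSet_Ioo
        intro t _; ring
      rw [this, kernel_integral a b ha hb hs.2]
    · rw [indicator_of_notMem hs, fiber_t0 s hs]
      simp
  have rhs2 : RL (a+b) ψ x = (Real.Gamma (a+b))⁻¹ * ∫ s in Ioo 0 x, (x - s) ^ (a+b-1) * ψ s := by
    rw [RL_of_ne (by positivity : a + b ≠ 0), intervalIntegral.integral_of_le hx.le,
      integral_Ioc_eq_integral_Ioo]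
  rw [lhs1, swap, rhs1, rhs2]
  have : ∫ s in Ioo 0 x, ((x - s) ^ (a+b-1) * B) * ψ s
      = B * ∫ s in Ioo 0 x, (x - s) ^ (a+b-1) * ψ s := by
    rw [← MeasureTheory.integral_const_mul _ _]
    apply MeasureTheory.setIntegral_congr_fun measurableSet_Ioo
    intro s _; ring
  rw [this, hB]
  field_simp

section G
variable (c : ℝ) (ψ : ℝ → ℝ)

noncomputable def Gk : ℝ × ℝ → ℝ :=
  ({q : ℝ × ℝ | 0 < q.2 ∧ q.2 < q.1 ∧ q.1 < 1}).indicator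
    (fun q => (q.1 - q.2) ^ (c-1) * ψ q.2)

lemma Gk_meas (hm : Measurable ψ) : Measurable (Gk c ψ) := by
  apply Measurable.indicator _ ?_
  · fun_prop
  · apply MeasurableSet.inter (measurableSet_lt measurable_const measurable_snd)
    exact MeasurableSet.inter (measurableSet_lt measurable_snd measurable_fst)
      (measurableSet_lt measurable_fst measurable_const)

lemma Gk_fiber_t {s : ℝ} (hs : s ∈ Ioo (0:ℝ) 1) :
    (fun t => Gk c ψ (t, s)) = (Ioo s 1).indicator (fun t => (t - s) ^ (c-1) * ψ s) := by
  funext t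
  by_cases h : t ∈ Ioo s 1
  · rw [indicator_of_mem h, Gk, indicator_of_mem (by exact ⟨hs.1, h.1, h.2⟩)]
  · rw [indicator_of_notMem h, Gk, indicator_of_notMem]
    intro hmem; exact h ⟨hmem.2.1, hmem.2.2⟩

lemma Gk_fiber_t0 {s : ℝ} (hs : s ∉ Ioo (0:ℝ) 1) :
    (fun t => Gk c ψ (t, s)) = fun _ => (0:ℝ) := by
  funext t
  rw [Gk, indicator_of_notMem]
  intro hmem; exact hs ⟨hmem.1, hmem.2.1.trans hmem.2.2⟩

lemma Gk_fiber_s {t : ℝ} (ht : t ∈ Ioo (0:ℝ) 1) :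
    (fun s => Gk c ψ (t, s)) = (Ioo 0 t).indicator (fun s => (t - s) ^ (c-1) * ψ s) := by
  funext s
  by_cases h : s ∈ Ioo 0 t
  · rw [indicator_of_mem h, Gk, indicator_of_mem (by exact ⟨h.1, h.2, ht.2⟩)]
  · rw [indicator_of_notMem h, Gk, indicator_of_notMem]
    intro hmem; exact h ⟨hmem.1, hmem.2.1⟩

lemma Gk_integrable (hc : 0 < c) (hm : Measurable ψ) (hi : Integrable ψ volume) :
    Integrable (Gk c ψ) (volume.prod volume) := by
  set B1 := Real.Gamma 1 * Real.Gamma c / Real.Gamma (1+c) with hB1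
  have hB1pos : 0 < B1 := by
    rw [hB1]
    have := Real.Gamma_pos_of_pos hc
    have := Real.Gamma_pos_of_pos (show (0:ℝ) < 1 + c by linarith)
    rw [Real.Gamma_one]
    positivity
  rw [MeasureTheory.integrable_prod_iff' (Gk_meas c ψ hm).aestronglyMeasurable]
  constructor
  · apply Filter.Eventually.of_forall
    intro s
    by_cases hs : s ∈ Ioo (0:ℝ) 1
    · rw [Gk_fiber_t c ψ hs, integrable_indicator_iff measurableSet_Ioo]
      have hk := (kernel_integrableOn 1 c one_pos hc hs.2).mul_const (ψ s)
      apply IntegrableOn.congr_fun hk _ measurableSet_Ioo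
      intro t _
      show (1 - t) ^ ((1:ℝ)-1) * (t - s) ^ (c-1) * ψ s = (t - s) ^ (c-1) * ψ s
      norm_num
    · rw [Gk_fiber_t0 c ψ hs]
      exact integrable_zero _ _ _
  · apply MeasureTheory.Integrable.mono'
      (g := fun s => (Ioo (0:ℝ) 1).indicator (fun s => B1 * ‖ψ s‖) s)
    · rw [integrable_indicator_iff measurableSet_Ioo]
      exact (hi.norm.const_mul B1).integrableOn
    · exact ((Gk_meas c ψ hm).norm.stronglyMeasurable.integral_prod_left').aestronglyMeasurable
    · apply Filter.Eventually.of_forall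
      intro s
      by_cases hs : s ∈ Ioo (0:ℝ) 1
      · rw [indicator_of_mem hs]
        have hnorm : (fun t => ‖Gk c ψ (t, s)‖)
            = (Ioo s 1).indicator (fun t => (t - s) ^ (c-1) * ‖ψ s‖) := by
          funext t
          have e : Gk c ψ (t, s)
              = (Ioo s 1).indicator (fun t => (t - s) ^ (c-1) * ψ s) t :=
            congrFun (Gk_fiber_t c ψ hs) t
          rw [e]
          by_cases ht : t ∈ Ioo s 1
          · rw [norm_indicator_eq_indicator_norm, indicator_of_mem ht, indicator_of_mem ht]
            have h2 : (0:ℝ) ≤ (t - s) ^ (c-1) := Real.rpow_nonneg (by linarith [ht.1]) _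
            simp [norm_mul, Real.norm_eq_abs, abs_of_nonneg h2]
          · rw [norm_indicator_eq_indicator_norm, indicator_of_notMem ht,
              indicator_of_notMem ht]
        have : ∫ t, ‖Gk c ψ (t, s)‖ = (1-s) ^ (1+c-1) * B1 * ‖ψ s‖ := by
          rw [hnorm, MeasureTheory.integral_indicator measurableSet_Ioo,
            MeasureTheory.integral_mul_const]
          have hker : ∫ t in Ioo s 1, (t - s) ^ (c-1)
              = (1-s) ^ (1+c-1) * B1 := by
            rw [← kernel_integral 1 c one_pos hc hs.2]
            apply MeasureTheory.setIntegral_congr_fun measurableSet_Ioo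
            intro t _
            show (t - s) ^ (c-1) = (1 - t) ^ ((1:ℝ)-1) * (t - s) ^ (c-1)
            norm_num
          rw [hker]
        rw [Real.norm_eq_abs, abs_of_nonneg (by positivity : (0:ℝ) ≤ ∫ t, ‖Gk c ψ (t, s)‖),
          this]
        have hle : (1-s) ^ (1+c-1) ≤ 1 :=
          Real.rpow_le_one (by linarith [hs.2]) (by linarith [hs.1]) (by linarith)
        have h4 : (1-s) ^ (1+c-1) * B1 * ‖ψ s‖ ≤ 1 * (B1 * ‖ψ s‖) := by
          rw [mul_assoc]
          exact mul_le_mul_of_nonneg_right hle (by positivity)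
        linarith
      · rw [indicator_of_notMem hs]
        have hz : (fun t => ‖Gk c ψ (t, s)‖) = fun _ => (0:ℝ) := by
          funext t
          rw [congrFun (Gk_fiber_t0 c ψ hs) t, norm_zero]
        rw [hz]
        simp

end G

lemma RL_integrableOn (c : ℝ) (hc : 0 < c) (ψ : ℝ → ℝ) (hm : Measurable ψ)
    (hi : Integrable ψ volume) : IntegrableOn (RL c ψ) (Ioo 0 1) volume := by
  have hGi := Gk_integrable c ψ hc hm hi
  have hpt : ∀ t ∈ Ioo (0:ℝ) 1, RL c ψ t = (Real.Gamma c)⁻¹ * ∫ s, Gk c ψ (t, s) := by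
    intro t ht
    rw [RL_of_ne hc.ne', intervalIntegral.integral_of_le ht.1.le,
      integral_Ioc_eq_integral_Ioo, Gk_fiber_s c ψ ht,
      MeasureTheory.integral_indicator measurableSet_Ioo]
  apply MeasureTheory.Integrable.mono'
    (g := fun t => (Real.Gamma c)⁻¹ * ∫ s, ‖Gk c ψ (t, s)‖)
  · exact ((hGi.norm.integral_prod_left).const_mul _).integrableOn
  · apply AEStronglyMeasurable.congr
      (f := fun t => (Real.Gamma c)⁻¹ * ∫ s, Gk c ψ (t, s))
    · exact (((Gk_meas c ψ hm).stronglyMeasurable.integral_prod_right').const_mul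
        _).aestronglyMeasurable
    · filter_upwards [ae_restrict_mem measurableSet_Ioo] with t ht
      exact (hpt t ht).symm
  · filter_upwards [ae_restrict_mem measurableSet_Ioo] with t ht
    rw [hpt t ht]
    have h1 : (0:ℝ) ≤ (Real.Gamma c)⁻¹ := by
      have := Real.Gamma_pos_of_pos hc; positivity
    rw [Real.norm_eq_abs, abs_mul, abs_of_nonneg h1]
    apply mul_le_mul_of_nonneg_left _ h1
    rw [← Real.norm_eq_abs]
    exact MeasureTheory.norm_integral_le_integral_norm _
lemma ae_weight_integrable (c : ℝ) (hc : 0 < c) (ψ : ℝ → ℝ) (hm : Measurable ψ)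
    (hi : Integrable ψ volume) :
    ∀ᵐ x ∂(volume : Measure ℝ), x ∈ Ioo (0:ℝ) 1 →
      IntegrableOn (fun s => (x-s) ^ (c-1) * ψ s) (Ioc 0 x) volume := by
  filter_upwards [(Gk_integrable c ψ hc hm hi).prod_right_ae] with x hx hmem
  rw [Gk_fiber_s c ψ hmem, integrable_indicator_iff measurableSet_Ioo] at hx
  rw [integrableOn_Ioc_iff_integrableOn_Ioo]
  exact hx

lemma ae_hasDerivAt_primitive (h : ℝ → ℝ) (hi : Integrable h volume) :
    ∀ᵐ x ∂(volume : Measure ℝ),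
      HasDerivAt (fun z => ∫ t in (0:ℝ)..z, h t) (h x) x := by
  filter_upwards [IsUnifLocDoublingMeasure.ae_tendsto_average_norm_sub
    (μ := (volume : Measure ℝ)) hi.locallyIntegrable 1] with x hx
  rw [hasDerivAt_iff_tendsto_slope]
  set G : ℝ → ℝ := fun z => ∫ t in (0:ℝ)..z, h t with hG
  have key : Tendsto (fun y : ℝ => ⨍ t in closedBall x |y - x|, ‖h t - h x‖)
      (nhdsWithin x {x}ᶜ) (nhds 0) := by
    apply hx (fun _ => x) (fun y => |y - x|)
    · rw [Metric.tendsto_nhdsWithin_nhdsWithin]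
      intro ε hε
      refine ⟨ε, hε, fun {y} hy hd => ?_⟩
      constructor
      · simp only [mem_Ioi]
        rw [abs_pos, sub_ne_zero]
        simpa using hy
      · rw [Real.dist_eq, sub_zero, abs_abs]
        rwa [Real.dist_eq] at hd
    · apply Eventually.of_forall
      intro y
      simp [Metric.mem_closedBall, abs_nonneg]
  have bound : ∀ y : ℝ, y ≠ x →
      ‖slope G x y - h x‖ ≤ 2 * ⨍ t in closedBall x |y - x|, ‖h t - h x‖ := by
    intro y hy
    have hyx : |y - x| > 0 := abs_pos.mpr (sub_ne_zero.mpr hy)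
    have hGsub : G y - G x = ∫ t in x..y, h t := by
      rw [hG]
      have := intervalIntegral.integral_add_adjacent_intervals
        (a := 0) (b := x) (c := y) hi.intervalIntegrable hi.intervalIntegrable
      linarith [this]
    have hslope : slope G x y - h x = (y - x)⁻¹ * ∫ t in x..y, (h t - h x) := by
      rw [slope_def_field, hGsub]
      rw [intervalIntegral.integral_sub hi.intervalIntegrable
        (intervalIntegrable_const (c := h x))]
      rw [intervalIntegral.integral_const, smul_eq_mul]
      have hne : y - x ≠ 0 := sub_ne_zero.mpr hy
      field_simp
    rw [hslope]
    have hIoc : uIoc x y ⊆ closedBall x |y - x| := by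
      intro t ht
      rw [Metric.mem_closedBall, Real.dist_eq]
      rcases le_or_gt x y with hle | hlt
      · rw [uIoc_of_le hle] at ht
        rw [abs_of_pos (by linarith [ht.1]), abs_of_nonneg (by linarith : (0:ℝ) ≤ y - x)]
        linarith [ht.2]
      · rw [uIoc_of_ge hlt.le] at ht
        rw [abs_of_nonpos (by linarith [ht.2]), abs_of_nonpos (by linarith : y - x ≤ 0)]
        linarith [ht.1]
    have h1 : ‖∫ t in x..y, (h t - h x)‖ ≤ ∫ t in uIoc x y, ‖h t - h x‖ :=
      intervalIntegral.norm_integral_le_integral_norm_uIoc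
    have hInt : IntegrableOn (fun t => ‖h t - h x‖) (closedBall x |y - x|) volume := by
      have h5 : IntegrableOn (fun t => h t - h x) (closedBall x |y - x|) volume :=
        hi.integrableOn.sub
          (MeasureTheory.integrableOn_const measure_closedBall_lt_top.ne)
      exact h5.norm
    have h2 : ∫ t in uIoc x y, ‖h t - h x‖ ≤ ∫ t in closedBall x |y - x|, ‖h t - h x‖ := by
      apply MeasureTheory.setIntegral_mono_set hInt
      · exact Eventually.of_forall (fun t => norm_nonneg _)
      · exact HasSubset.Subset.eventuallyLE hIoc
    have hvol : (volume (closedBall x |y - x|)).toReal = 2 * |y - x| := by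
      rw [Real.volume_closedBall, ENNReal.toReal_ofReal (by positivity)]
    rw [norm_mul, Real.norm_eq_abs (((y:ℝ) - x)⁻¹), abs_inv,
      setAverage_eq, measureReal_def, hvol, smul_eq_mul]
    calc |y - x|⁻¹ * ‖∫ t in x..y, (h t - h x)‖
        ≤ |y - x|⁻¹ * ∫ t in closedBall x |y - x|, ‖h t - h x‖ := by
          apply mul_le_mul_of_nonneg_left (le_trans h1 h2) (by positivity)
      _ = 2 * ((2 * |y - x|)⁻¹ * ∫ t in closedBall x |y - x|, ‖h t - h x‖) := by
          rw [mul_inv]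
          ring
  have hnonneg : ∀ y : ℝ, 0 ≤ 2 * ⨍ t in closedBall x |y - x|, ‖h t - h x‖ := by
    intro y
    have : 0 ≤ ⨍ t in closedBall x |y - x|, ‖h t - h x‖ := by
      rw [setAverage_eq, smul_eq_mul]
      positivity
    linarith
  rw [tendsto_iff_norm_sub_tendsto_zero]
  apply squeeze_zero' (g := fun y => 2 * ⨍ t in closedBall x |y - x|, ‖h t - h x‖)
  · apply eventually_nhdsWithin_of_forall
    intro y hy
    exact norm_nonneg _
  · apply eventually_nhdsWithin_of_forall
    intro y hy
    exact bound y (by simpa using hy)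
  · have : Tendsto (fun y : ℝ => 2 * ⨍ t in closedBall x |y - x|, ‖h t - h x‖)
        (nhdsWithin x {x}ᶜ) (nhds (2 * 0)) := key.const_mul 2
    simpa using this

/-- The Hilfer fractional derivative `D^{α,γ₁}_H g = I^{γ₁} (d/dx) I^{1-α-γ₁} g`
    of order `0 < α ≤ 1` and type `0 ≤ γ₁ ≤ 1-α` is a left inverse of the
    Riemann–Liouville fractional integral `Iᵅ` on `X_FT = I^{1-α}(L¹(0,1))`. -/
theorem hilfer_left_inverse (α γ₁ : ℝ) (hα : 0 < α) (hα1 : α ≤ 1)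
    (hγ : 0 ≤ γ₁) (hγ1 : γ₁ ≤ 1 - α) (f φ : ℝ → ℝ)
    (hφ : IntegrableOn φ (Ioo (0:ℝ) 1))
    (hf : ∀ x ∈ Icc (0:ℝ) 1, f x = RL (1 - α) φ x) :
    ∀ᵐ x ∂(volume.restrict (Icc (0:ℝ) 1)),
      RL γ₁ (fun y => deriv (fun z => RL (1 - α - γ₁) (RL α f) z) y) x = f x := by
  classical
  -- measurable representative of φ supported in (0,1)
  set g : ℝ → ℝ := hφ.1.mk φ with hg
  have hgm : StronglyMeasurable g := hφ.1.stronglyMeasurable_mk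
  have hφg : φ =ᵐ[volume.restrict (Ioo 0 1)] g := hφ.1.ae_eq_mk
  set ψ : ℝ → ℝ := (Ioo (0:ℝ) 1).indicator g with hψdef
  have hψm : Measurable ψ := hgm.measurable.indicator measurableSet_Ioo
  have hψi : Integrable ψ volume := by
    rw [hψdef, integrable_indicator_iff measurableSet_Ioo]
    exact hφ.congr hφg
  have hφψ : ∀ᵐ s ∂(volume : Measure ℝ), s ∈ Ioo (0:ℝ) 1 → φ s = ψ s := by
    filter_upwards [(ae_restrict_iff' measurableSet_Ioo).mp hφg] with s hs hmem
    rw [hψdef, indicator_of_mem hmem]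
    exact hs hmem
  have hne1 : ∀ᵐ s ∂(volume : Measure ℝ), s ≠ (1:ℝ) := by
    filter_upwards [measure_eq_zero_iff_ae_notMem.mp (measure_singleton (1:ℝ))] with s hs
    simpa using hs
  -- RL congruence lemma
  have RLcongr : ∀ (c : ℝ), c ≠ 0 → ∀ (u v : ℝ → ℝ), ∀ x ∈ Icc (0:ℝ) 1,
      (∀ᵐ s ∂(volume : Measure ℝ), s ∈ Ioc 0 x → u s = v s) → RL c u x = RL c v x := by
    intro c hc u v x hx hae
    rw [RL_of_ne hc, RL_of_ne hc]
    congr 1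
    apply intervalIntegral.integral_congr_ae
    filter_upwards [hae] with s hs hmem
    rw [uIoc_of_le hx.1] at hmem
    rw [hs hmem]
  -- Step 1 : RL α f = RL 1 ψ on [0,1]
  have S1 : ∀ x ∈ Icc (0:ℝ) 1, RL α f x = RL 1 ψ x := by
    intro x hx
    rcases eq_or_lt_of_le hα1 with hA | hA
    · -- α = 1
      have hf' : ∀ s ∈ Icc (0:ℝ) 1, f s = φ s := by
        intro s hs
        rw [hf s hs, ← hA]
        norm_num [RL]
      rw [← hA]
      apply RLcongr α hα.ne' f ψ x hx
      filter_upwards [hφψ, hne1] with s hs hs1 hmem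
      rw [hf' s ⟨hmem.1.le, hmem.2.trans hx.2⟩]
      exact hs ⟨hmem.1, lt_of_le_of_ne (hmem.2.trans hx.2) hs1⟩
    · -- α < 1
      have h1α : (1:ℝ) - α ≠ 0 := (by linarith : (0:ℝ) < 1 - α).ne'
      have hfp : ∀ s ∈ Icc (0:ℝ) 1, f s = RL (1-α) ψ s := by
        intro s hs
        rw [hf s hs]
        apply RLcongr (1-α) h1α φ ψ s hs
        filter_upwards [hφψ, hne1] with u hu hu1 hmem
        exact hu ⟨hmem.1, lt_of_le_of_ne (hmem.2.trans hs.2) hu1⟩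
      have c1 : RL α f x = RL α (RL (1-α) ψ) x := by
        apply RLcongr α hα.ne' _ _ x hx
        apply Filter.Eventually.of_forall
        intro s hmem
        exact hfp s ⟨hmem.1.le, hmem.2.trans hx.2⟩
      rw [c1]
      rcases eq_or_lt_of_le hx.1 with hx0 | hx0
      · rw [RL_of_ne hα.ne', RL_of_ne one_ne_zero, ← hx0]
        simp
      · have hsg := RL_semigroup α (1-α) hα (by linarith) ψ hψm hx0 hψi.integrableOn ?_
        · rw [hsg]
          have e : α + (1-α) = 1 := by ring
          rw [e]
        · apply IntegrableOn.congr_fun hψi.integrableOn _ measurableSet_Ioc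
          intro s hs
          show ψ s = (x - s) ^ (α + (1-α) - 1) * ψ s
          have e2 : α + (1-α) - 1 = 0 := by ring
          rw [e2, Real.rpow_zero, one_mul]
  -- the inner fractional integral of ψ and its primitive
  set h : ℝ → ℝ := fun t => RL (1-α-γ₁) ψ t with hh
  set h₀ : ℝ → ℝ := (Ioo (0:ℝ) 1).indicator h with hh₀
  have hb'0 : 0 ≤ 1 - α - γ₁ := by linarith
  have hh₀i : Integrable h₀ volume := by
    rw [hh₀, integrable_indicator_iff measurableSet_Ioo]
    rcases eq_or_lt_of_le hb'0 with hb0 | hbpos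
    · apply IntegrableOn.congr_fun hψi.integrableOn _ measurableSet_Ioo
      intro t _
      rw [hh]
      show ψ t = RL (1-α-γ₁) ψ t
      rw [← hb0]
      norm_num [RL]
    · exact RL_integrableOn _ hbpos ψ hψm hψi
  -- bounded-weight integrability
  have hwz : ∀ z ∈ Icc (0:ℝ) 1, IntegrableOn
      (fun s => (z-s) ^ (1-α-γ₁) * ψ s) (Ioc 0 z) volume := by
    intro z hz
    apply Integrable.mono' hψi.norm.integrableOn
      ((by fun_prop : Measurable (fun s => (z-s) ^ (1-α-γ₁) * ψ s)).aestronglyMeasurable)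
    filter_upwards [ae_restrict_mem measurableSet_Ioc] with s hs
    rw [norm_mul]
    have hzs0 : (0:ℝ) ≤ z - s := by linarith [hs.2]
    have h1 : ‖(z-s) ^ (1-α-γ₁)‖ ≤ 1 := by
      rw [Real.norm_eq_abs, abs_of_nonneg (Real.rpow_nonneg hzs0 _)]
      exact Real.rpow_le_one hzs0 (by linarith [hs.1, hz.2]) hb'0
    calc ‖(z-s) ^ (1-α-γ₁)‖ * ‖ψ s‖ ≤ 1 * ‖ψ s‖ :=
          mul_le_mul_of_nonneg_right h1 (norm_nonneg _)
      _ = ‖ψ s‖ := one_mul _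
  -- Step 2h : RL 1 h = primitive of h₀ on [0,1]
  have S2h : ∀ z ∈ Icc (0:ℝ) 1, RL 1 h z = ∫ t in (0:ℝ)..z, h₀ t := by
    intro z hz
    rw [RL_of_ne one_ne_zero, Real.Gamma_one, inv_one, one_mul]
    have e1 : (∫ t in (0:ℝ)..z, (z - t) ^ ((1:ℝ)-1) * h t) = ∫ t in (0:ℝ)..z, h t := by
      apply intervalIntegral.integral_congr
      intro t _
      show (z - t) ^ ((1:ℝ)-1) * h t = h t
      norm_num
    rw [e1]
    apply intervalIntegral.integral_congr_ae
    filter_upwards [hne1] with t ht1 hmem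
    rw [uIoc_of_le hz.1] at hmem
    have hmem' : t ∈ Ioo (0:ℝ) 1 := ⟨hmem.1, lt_of_le_of_ne (hmem.2.trans hz.2) ht1⟩
    rw [hh₀, Set.indicator_of_mem hmem']
  -- Step 2 : RL (1-α-γ₁) (RL α f) = RL 1 h on [0,1]
  have S2 : ∀ z ∈ Icc (0:ℝ) 1, RL (1-α-γ₁) (RL α f) z = RL 1 h z := by
    intro z hz
    rcases eq_or_lt_of_le hb'0 with hb0 | hbpos
    · have lhs : RL (1-α-γ₁) (RL α f) z = RL α f z := by
        rw [← hb0]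
        norm_num [RL]
      have rhs : RL 1 h z = RL 1 ψ z := by
        apply RLcongr 1 one_ne_zero h ψ z hz
        apply Filter.Eventually.of_forall
        intro s _
        rw [hh]
        show RL (1-α-γ₁) ψ s = ψ s
        rw [← hb0]
        norm_num [RL]
      rw [lhs, rhs, S1 z hz]
    · rcases eq_or_lt_of_le hz.1 with hz0 | hz0
      · rw [RL_of_ne (by linarith : 1-α-γ₁ ≠ 0), RL_of_ne one_ne_zero, ← hz0]
        simp
      · have c1 : RL (1-α-γ₁) (RL α f) z = RL (1-α-γ₁) (RL 1 ψ) z := by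
          apply RLcongr _ (by linarith : 1-α-γ₁ ≠ 0) _ _ z hz
          apply Filter.Eventually.of_forall
          intro s hmem
          exact S1 s ⟨hmem.1.le, hmem.2.trans hz.2⟩
        have c2 : RL (1-α-γ₁) (RL 1 ψ) z = RL ((1-α-γ₁) + 1) ψ z := by
          apply RL_semigroup _ 1 hbpos one_pos ψ hψm hz0 hψi.integrableOn
          have e : (1-α-γ₁) + 1 - 1 = 1-α-γ₁ := by ring
          rw [e]
          exact hwz z hz
        have c3 : RL 1 (RL (1-α-γ₁) ψ) z = RL (1 + (1-α-γ₁)) ψ z := by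
          apply RL_semigroup 1 _ one_pos hbpos ψ hψm hz0 hψi.integrableOn
          have e : 1 + (1-α-γ₁) - 1 = 1-α-γ₁ := by ring
          rw [e]
          exact hwz z hz
        rw [c1, c2, hh]
        rw [show (1-α-γ₁) + 1 = 1 + (1-α-γ₁) by ring, ← c3]
  -- derivative a.e.
  have hd : ∀ᵐ t ∂(volume : Measure ℝ), t ∈ Ioo (0:ℝ) 1 →
      deriv (fun z => RL (1 - α - γ₁) (RL α f) z) t = h t := by
    filter_upwards [ae_hasDerivAt_primitive h₀ hh₀i] with t ht hto
    have hGP : (fun z => RL (1 - α - γ₁) (RL α f) z)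
        =ᶠ[nhds t] (fun z => ∫ u in (0:ℝ)..z, h₀ u) := by
      apply Filter.eventuallyEq_of_mem (isOpen_Ioo.mem_nhds hto)
      intro z hz
      have hzIcc : z ∈ Icc (0:ℝ) 1 := ⟨hz.1.le, hz.2.le⟩
      show RL (1 - α - γ₁) (RL α f) z = ∫ u in (0:ℝ)..z, h₀ u
      rw [S2 z hzIcc, S2h z hzIcc]
    rw [hGP.deriv_eq, ht.deriv, hh₀]
    exact indicator_of_mem hto h
  -- reduce to a.e. statement on Ioo 0 1
  suffices main : ∀ᵐ x ∂(volume : Measure ℝ), x ∈ Ioo (0:ℝ) 1 →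
      RL γ₁ (fun y => deriv (fun z => RL (1 - α - γ₁) (RL α f) z) y) x = f x by
    have h1 : ∀ᵐ x ∂(volume.restrict (Icc (0:ℝ) 1)), x ∈ Ioo (0:ℝ) 1 →
        RL γ₁ (fun y => deriv (fun z => RL (1 - α - γ₁) (RL α f) z) y) x = f x :=
      ae_restrict_of_ae main
    have h2 : ∀ᵐ x ∂(volume.restrict (Icc (0:ℝ) 1)), x ≠ (0:ℝ) ∧ x ≠ (1:ℝ) := by
      apply ae_restrict_of_ae
      filter_upwards [measure_eq_zero_iff_ae_notMem.mp (measure_singleton (0:ℝ)), hne1] with x h0 h1'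
      exact ⟨by simpa using h0, h1'⟩
    filter_upwards [h1, h2, ae_restrict_mem measurableSet_Icc] with x hx hx01 hxIcc
    exact hx ⟨lt_of_le_of_ne hxIcc.1 (Ne.symm hx01.1), lt_of_le_of_ne hxIcc.2 hx01.2⟩
  rcases eq_or_lt_of_le hγ with hg0 | hgpos
  · -- γ₁ = 0 : the Hilfer derivative is just deriv of the primitive
    filter_upwards [hd, hφψ] with x hdx hpx hmem
    have hxIcc : x ∈ Icc (0:ℝ) 1 := ⟨hmem.1.le, hmem.2.le⟩
    have e0 : RL γ₁ (fun y => deriv (fun z => RL (1 - α - γ₁) (RL α f) z) y) x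
        = deriv (fun z => RL (1 - α - γ₁) (RL α f) z) x := by
      rw [← hg0]
      norm_num [RL]
    rw [e0, hdx hmem, hh]
    show RL (1-α-γ₁) ψ x = f x
    rcases eq_or_lt_of_le hα1 with hA | hA
    · -- α = 1, so 1-α-γ₁ = 0 and f x = φ x
      have eb : 1 - α - γ₁ = 0 := by rw [← hA, ← hg0]; ring
      rw [eb]
      have : RL 0 ψ x = ψ x := by norm_num [RL]
      rw [this, ← hpx hmem, hf x hxIcc, ← hA]
      norm_num [RL]
    · -- α < 1
      have eb : 1 - α - γ₁ = 1 - α := by rw [← hg0]; ring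
      rw [eb, hf x hxIcc]
      have hcg : RL (1-α) φ x = RL (1-α) ψ x := by
        apply RLcongr (1-α) (by linarith : (1:ℝ)-α ≠ 0) φ ψ x hxIcc
        filter_upwards [hφψ] with s hs hmems
        exact hs ⟨hmems.1, lt_of_le_of_lt hmems.2 hmem.2⟩
      rw [hcg]
  · -- γ₁ > 0, hence α < 1
    have hA : α < 1 := by linarith
    have hweight := ae_weight_integrable (1-α) (by linarith) ψ hψm hψi
    filter_upwards [hweight, hφψ] with x hwx hpx hmem
    have hxIcc : x ∈ Icc (0:ℝ) 1 := ⟨hmem.1.le, hmem.2.le⟩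
    have hfx : f x = RL (1-α) ψ x := by
      rw [hf x hxIcc]
      apply RLcongr (1-α) (by linarith : (1:ℝ)-α ≠ 0) φ ψ x hxIcc
      filter_upwards [hφψ] with s hs hmems
      exact hs ⟨hmems.1, lt_of_le_of_lt hmems.2 hmem.2⟩
    have e1 : RL γ₁ (fun y => deriv (fun z => RL (1 - α - γ₁) (RL α f) z) y) x
        = RL γ₁ h x := by
      rw [RL_of_ne hgpos.ne', RL_of_ne hgpos.ne']
      congr 1
      apply intervalIntegral.integral_congr_ae
      filter_upwards [hd] with t hdt hmemt
      rw [uIoc_of_le hxIcc.1] at hmemt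
      have : t ∈ Ioo (0:ℝ) 1 := ⟨hmemt.1, lt_of_le_of_lt hmemt.2 hmem.2⟩
      rw [hdt this]
    rw [e1, hfx]
    rcases eq_or_lt_of_le hb'0 with hb0 | hbpos
    · -- 1-α-γ₁ = 0, so γ₁ = 1-α and h = ψ
      have rhs : RL γ₁ h x = RL γ₁ ψ x := by
        apply RLcongr γ₁ hgpos.ne' h ψ x hxIcc
        apply Filter.Eventually.of_forall
        intro s _
        rw [hh]
        show RL (1-α-γ₁) ψ s = ψ s
        rw [← hb0]
        norm_num [RL]
      rw [rhs, show γ₁ = 1-α by linarith]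
    · -- 0 < 1-α-γ₁ : semigroup
      have hsg := RL_semigroup γ₁ (1-α-γ₁) hgpos hbpos ψ hψm hmem.1 hψi.integrableOn ?_
      · rw [hh]
        show RL γ₁ (RL (1-α-γ₁) ψ) x = RL (1-α) ψ x
        rw [hsg, show γ₁ + (1-α-γ₁) = 1-α by ring]
      · have e : γ₁ + (1-α-γ₁) - 1 = (1-α) - 1 := by ring
        rw [e]
        exact hwx hmem
end

section
/- Let (κ, k) be a pair of kernels satisfying the generalized Sonine condition (κ * k)(t) = t^{n-1}/(n-1)! for some n ∈ ℕ. Then for every f with f⁽ⁿ⁾ locally integrable (f n-times differentiable, appropriately regular), (I_{(κ)} (∗D_{(k)} f))(t) = f(t) - Σ_{j=0}^{n-1} f⁽ʲ⁾(0) tʲ/j! for t > 0, where ∗D_{(k)} f = dⁿ/dtⁿ (k * (f - Σ_{j=0}^{n-1} f⁽ʲ⁾(0) h_{j+1})) with h_{j+1}(t) = tʲ/j!. -/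
open MeasureTheory Set
open scoped Interval

/-- Laplace convolution on `(0,∞)`. -/
noncomputable def lconv (g h : ℝ → ℝ) (t : ℝ) : ℝ := ∫ τ in (0:ℝ)..t, g (t - τ) * h τ

/-- The Taylor polynomial of degree `n-1` of `f` at `0`. -/
noncomputable def taylorPoly (f : ℝ → ℝ) (n : ℕ) (t : ℝ) : ℝ :=
  ∑ j ∈ Finset.range n, iteratedDeriv j f 0 * t ^ j / (Nat.factorial j : ℝ)

noncomputable def gfcMono (i : ℕ) : ℝ → ℝ := fun t => t ^ i / (Nat.factorial i : ℝ)

lemma gfcMono_contDiff (i : ℕ) {m : WithTop ℕ∞} : ContDiff ℝ m (gfcMono i) :=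
  (contDiff_id.pow i).div_const _

lemma gfcMono_hasDerivAt (i : ℕ) (t : ℝ) : HasDerivAt (gfcMono (i+1)) (gfcMono i t) t := by
  have h : HasDerivAt (fun x : ℝ => x ^ (i+1) / ((Nat.factorial (i+1) : ℝ))) _ t := (hasDerivAt_pow (i+1) t).div_const ((Nat.factorial (i+1) : ℝ))
  convert h using 1
  · rfl
  have : ((Nat.factorial (i+1) : ℝ)) = (i+1) * (Nat.factorial i) := by
    push_cast [Nat.factorial_succ]; ring
  rw [show gfcMono i t = t ^ i / (Nat.factorial i : ℝ) from rfl, Nat.add_sub_cancel, this]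
  have hi : (Nat.factorial i : ℝ) ≠ 0 := Nat.cast_ne_zero.2 (Nat.factorial_ne_zero i)
  field_simp
  push_cast; ring

lemma iteratedDeriv_zero_fun (j : ℕ) : iteratedDeriv j (fun _ : ℝ => (0:ℝ)) = fun _ => 0 := by
  induction j with
  | zero => simp
  | succ j ih => rw [iteratedDeriv_succ, ih]; funext t; simp

lemma gfcMono_iteratedDeriv (j i : ℕ) :
    iteratedDeriv j (gfcMono i) = fun t => if j ≤ i then gfcMono (i - j) t else 0 := by
  induction j generalizing i with
  | zero => simp
  | succ j ih =>
    rw [iteratedDeriv_succ']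
    cases i with
    | zero =>
      have h0 : deriv (gfcMono 0) = fun _ : ℝ => (0:ℝ) := by
        funext t
        have : gfcMono 0 = fun _ : ℝ => (1:ℝ) := by funext s; simp [gfcMono]
        rw [this, deriv_const]
      rw [h0, iteratedDeriv_zero_fun]
      funext t; simp
    | succ i =>
      have hd : deriv (gfcMono (i+1)) = gfcMono i := by
        funext t; exact (gfcMono_hasDerivAt i t).deriv
      rw [hd, ih i]
      funext t
      simp [Nat.succ_sub_succ, Nat.succ_le_succ_iff]

lemma gfcMono_deriv (m : ℕ) :
    deriv (gfcMono m) = fun t => if 1 ≤ m then gfcMono (m-1) t else 0 := by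
  rw [← iteratedDeriv_one, gfcMono_iteratedDeriv]

lemma gfcMono_differentiable (m : ℕ) : Differentiable ℝ (gfcMono m) :=
  (gfcMono_contDiff m (m := 1)).differentiable one_ne_zero

lemma taylorPoly_eq (f : ℝ → ℝ) (n : ℕ) :
    taylorPoly f n = fun t => ∑ i ∈ Finset.range n, iteratedDeriv i f 0 * gfcMono i t := by
  funext t
  exact Finset.sum_congr rfl fun i _ => by rw [gfcMono, mul_div_assoc]

lemma taylorPoly_contDiff (f : ℝ → ℝ) (n : ℕ) {m : WithTop ℕ∞} :
    ContDiff ℝ m (taylorPoly f n) := by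
  rw [taylorPoly_eq]
  exact ContDiff.sum fun i _ => contDiff_const.mul (gfcMono_contDiff i)

lemma taylorPoly_iteratedDeriv (f : ℝ → ℝ) (n j : ℕ) :
    iteratedDeriv j (taylorPoly f n) =
      fun t => ∑ i ∈ Finset.range n, iteratedDeriv i f 0 *
        (if j ≤ i then gfcMono (i - j) t else 0) := by
  induction j with
  | zero => rw [taylorPoly_eq]; funext t; simp
  | succ j ih =>
    rw [iteratedDeriv_succ, ih]
    funext t
    have hdiff : ∀ i ∈ Finset.range n, DifferentiableAt ℝ
        (fun t => iteratedDeriv i f 0 * (if j ≤ i then gfcMono (i - j) t else 0)) t := by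
      intro i _
      by_cases hji : j ≤ i
      · simp only [if_pos hji]
        exact (differentiableAt_const _).mul ((gfcMono_differentiable _).differentiableAt)
      · simp only [if_neg hji]
        simp
    rw [deriv_fun_sum hdiff]
    refine Finset.sum_congr rfl fun i _ => ?_
    by_cases hji : j ≤ i
    · simp only [if_pos hji]
      rw [deriv_const_mul _ ((gfcMono_differentiable _).differentiableAt)]
      rw [gfcMono_deriv]
      beta_reduce
      congr 1
      by_cases h2 : j + 1 ≤ i
      · have he : i - j - 1 = i - (j + 1) := by omega
        rw [if_pos (by omega : 1 ≤ i - j), if_pos h2, he]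
      · rw [if_neg (by omega : ¬ 1 ≤ i - j), if_neg h2]
    · simp only [if_neg hji, if_neg (by omega : ¬ j + 1 ≤ i), mul_zero]
      simp
lemma taylorPoly_iteratedDeriv_at_zero {f : ℝ → ℝ} {n j : ℕ} (hj : j < n) :
    iteratedDeriv j (taylorPoly f n) 0 = iteratedDeriv j f 0 := by
  rw [taylorPoly_iteratedDeriv]
  beta_reduce
  rw [Finset.sum_eq_single j]
  · simp [gfcMono]
  · intro i hi hij
    by_cases hji : j ≤ i
    · have h0 : gfcMono (i - j) 0 = 0 := by
        simp [gfcMono, zero_pow (by omega : i - j ≠ 0)]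
      simp [hji, h0]
    · simp [hji]
  · intro h; exact absurd (Finset.mem_range.2 hj) h

lemma taylorPoly_iteratedDeriv_top (f : ℝ → ℝ) (n : ℕ) :
    iteratedDeriv n (taylorPoly f n) = fun _ => 0 := by
  funext t
  rw [taylorPoly_iteratedDeriv]
  beta_reduce
  refine Finset.sum_eq_zero fun i hi => ?_
  rw [if_neg (by have := Finset.mem_range.1 hi; omega : ¬ n ≤ i), mul_zero]

lemma gfc_taylor_remainder (m : ℕ) (f : ℝ → ℝ) (hf : ContDiff ℝ (m+1) f) (t : ℝ) :
    ∫ u in (0:ℝ)..t, (t - u) ^ m / (Nat.factorial m : ℝ) * iteratedDeriv (m+1) f u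
      = f t - taylorPoly f (m+1) t := by
  have hcont : Continuous (iteratedDeriv (m+1) f) :=
    hf.continuous_iteratedDeriv (m+1) le_rfl
  have hderiv : ∀ y : ℝ, HasDerivAt (fun y => taylorWithinEval f m Set.univ y t)
      ((((m : ℕ).factorial : ℝ)⁻¹ * (t - y) ^ m) • iteratedDerivWithin (m+1) f Set.univ y) y := by
    intro y
    have h1 : ContDiffOn ℝ m f Set.univ :=
      (hf.of_le (by exact_mod_cast Nat.le_succ m)).contDiffOn
    have h2 : DifferentiableWithinAt ℝ (iteratedDerivWithin m f Set.univ) Set.univ y := by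
      rw [iteratedDerivWithin_univ]
      exact ((hf.differentiable_iteratedDeriv m
        (by exact_mod_cast Nat.lt_succ_self m)) y).differentiableWithinAt
    have := hasDerivWithinAt_taylorWithinEval (f := f) (x := t) (y := y) (n := m)
      (s := Set.univ) (s' := Set.univ) uniqueDiffOn_univ
      (by simp) (mem_univ y) (subset_refl _) h1 h2
    rwa [hasDerivWithinAt_univ] at this
  have hFTC := intervalIntegral.integral_eq_sub_of_hasDerivAt
    (f := fun y => taylorWithinEval f m Set.univ y t)
    (f' := fun y => (((m : ℕ).factorial : ℝ)⁻¹ * (t - y) ^ m) •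
      iteratedDerivWithin (m+1) f Set.univ y)
    (a := 0) (b := t) (fun x _ => hderiv x) ?_
  · rw [taylorWithinEval_self] at hFTC
    have hTP : taylorWithinEval f m Set.univ 0 t = taylorPoly f (m+1) t := by
      rw [taylor_within_apply, taylorPoly]
      refine Finset.sum_congr rfl fun i _ => ?_
      rw [iteratedDerivWithin_univ, smul_eq_mul, sub_zero]
      ring
    rw [hTP] at hFTC
    rw [← hFTC]
    refine intervalIntegral.integral_congr fun u _ => ?_
    rw [iteratedDerivWithin_univ, smul_eq_mul]
    ring
  · apply Continuous.intervalIntegrable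
    have : Continuous (iteratedDerivWithin (m+1) f Set.univ) := by
      rw [iteratedDerivWithin_univ]; exact hcont
    exact (continuous_const.mul ((continuous_const.sub continuous_id).pow m)).smul this

lemma gfc_conv_hasDerivAt (k G : ℝ → ℝ)
    (hk : ∀ T > (0:ℝ), IntegrableOn k (Ioc (0:ℝ) T))
    (hG : Differentiable ℝ G) (hG' : Continuous (deriv G)) (hG0 : G 0 = 0)
    {s : ℝ} (hs : 0 < s) :
    HasDerivAt (fun x => ∫ u in (0:ℝ)..x, k u * G (x - u))
      (∫ u in (0:ℝ)..s, k u * deriv G (s - u)) s := by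
  obtain ⟨C, hC⟩ := (isCompact_Icc (a := -(s+1)) (b := s+1)).exists_bound_of_continuousOn
    hG'.continuousOn
  have hC0 : 0 ≤ C := le_trans (norm_nonneg _) (hC 0 ⟨by linarith, by linarith⟩)
  have hmem : ∀ {y : ℝ}, |y| ≤ s + 1 → y ∈ Icc (-(s+1)) (s+1) := by
    intro y hy
    rw [abs_le] at hy
    exact ⟨by linarith [hy.1], hy.2⟩
  have hlip : ∀ x y : ℝ, x ∈ Icc (-(s+1)) (s+1) → y ∈ Icc (-(s+1)) (s+1) →
      |G x - G y| ≤ C * |x - y| := by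
    intro x y hx hy
    have := Convex.norm_image_sub_le_of_norm_hasDerivWithin_le
      (f := G) (f' := deriv G) (s := Icc (-(s+1)) (s+1))
      (fun z _ => (hG z).hasDerivAt.hasDerivWithinAt) (fun z hz => hC z hz)
      (convex_Icc _ _) hy hx
    simpa [Real.norm_eq_abs] using this
  have hGb : ∀ y : ℝ, y ∈ Icc (-(s+1)) (s+1) → |G y| ≤ C * |y| := by
    intro y hy
    simpa [hG0] using hlip y 0 hy ⟨by linarith, by linarith⟩
  have hII : ∀ x : ℝ, IntegrableOn (fun u => k u * G (x - u)) (Ioc (0:ℝ) (s+1)) volume := by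
    intro x
    exact (hk (s+1) (by linarith)).mul_continuousOn_of_subset
      ((hG.continuous.comp (continuous_const.sub continuous_id)).continuousOn)
      measurableSet_Ioc isCompact_Icc Ioc_subset_Icc_self
  have hIIs : ∀ x : ℝ, IntervalIntegrable (fun u => k u * G (x - u)) volume 0 s := by
    intro x
    rw [intervalIntegrable_iff, uIoc_of_le hs.le]
    exact ((hII x).mono_set (Ioc_subset_Ioc le_rfl (by linarith)))
  -- Part A : fixed upper limit s
  have hA : HasDerivAt (fun x => ∫ u in (0:ℝ)..s, k u * G (x - u))
      (∫ u in (0:ℝ)..s, k u * deriv G (s - u)) s := by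
    have hmeas : ∀ᶠ x in nhds s, AEStronglyMeasurable (fun u => k u * G (x - u))
        (volume.restrict (Ι (0:ℝ) s)) := by
      refine Filter.Eventually.of_forall fun x => ?_
      rw [uIoc_of_le hs.le]
      exact (hk s hs).aestronglyMeasurable.mul
        ((hG.continuous.comp (continuous_const.sub continuous_id)).aestronglyMeasurable)
    have hF'meas : AEStronglyMeasurable (fun u => k u * deriv G (s - u))
        (volume.restrict (Ι (0:ℝ) s)) := by
      rw [uIoc_of_le hs.le]
      exact (hk s hs).aestronglyMeasurable.mul
        ((hG'.comp (continuous_const.sub continuous_id)).aestronglyMeasurable)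
    have hbound : IntervalIntegrable (fun u => ‖k u‖ * C) volume 0 s := by
      rw [intervalIntegrable_iff, uIoc_of_le hs.le]
      exact (hk s hs).norm.mul_const C
    have hlips : ∀ᵐ u ∂volume, u ∈ Ι (0:ℝ) s →
        LipschitzOnWith (Real.nnabs (‖k u‖ * C)) (fun x => k u * G (x - u))
          (Metric.ball s (1/2)) := by
      refine Filter.Eventually.of_forall fun u hu => ?_
      rw [uIoc_of_le hs.le] at hu
      rw [Real.nnabs_of_nonneg (by positivity)]
      refine LipschitzOnWith.of_dist_le' fun x hx y hy => ?_
      rw [Metric.mem_ball, Real.dist_eq] at hx hy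
      rw [Real.dist_eq, Real.dist_eq, ← mul_sub, abs_mul]
      have hxs := abs_le.1 hx.le
      have hys := abs_le.1 hy.le
      have hxm : x - u ∈ Icc (-(s+1)) (s+1) := by
        apply hmem; rw [abs_le]
        constructor <;> [linarith [hu.1, hu.2, hxs.1]; linarith [hu.1, hu.2, hxs.2] ]
      have hym : y - u ∈ Icc (-(s+1)) (s+1) := by
        apply hmem; rw [abs_le]
        constructor <;> [linarith [hu.1, hu.2, hys.1]; linarith [hu.1, hu.2, hys.2] ]
      have h2 := hlip (x - u) (y - u) hxm hym
      have heq : x - u - (y - u) = x - y := by ring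
      rw [heq] at h2
      calc |k u| * |G (x - u) - G (y - u)| ≤ |k u| * (C * |x - y|) :=
            mul_le_mul_of_nonneg_left h2 (abs_nonneg _)
        _ = ‖k u‖ * C * |x - y| := by rw [Real.norm_eq_abs]; ring
    have hdiff : ∀ᵐ u ∂volume, u ∈ Ι (0:ℝ) s →
        HasDerivAt (fun x => k u * G (x - u)) (k u * deriv G (s - u)) s := by
      refine Filter.Eventually.of_forall fun u _ => ?_
      exact ((hG (s - u)).hasDerivAt.comp_sub_const s u).const_mul (k u)
    exact (intervalIntegral.hasDerivAt_integral_of_dominated_loc_of_lip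
      (F := fun x u => k u * G (x - u)) (bound := fun u => ‖k u‖ * C)
      (Metric.ball_mem_nhds s (by norm_num : (0:ℝ) < 1/2)) hmeas (hIIs s) hF'meas hlips hbound hdiff).2
  -- Part B : moving piece has derivative zero
  have hB : HasDerivAt (fun x => ∫ u in s..x, k u * G (x - u)) 0 s := by
    rw [hasDerivAt_iff_isLittleO]
    simp only [intervalIntegral.integral_same, sub_zero, smul_zero, sub_zero]
    rw [Asymptotics.isLittleO_iff]
    intro c hc
    set kk : ℝ → ℝ := (Ioc (0:ℝ) (s+1)).indicator (fun u => ‖k u‖) with hkk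
    have hkkint : Integrable kk volume :=
      MeasureTheory.IntegrableOn.integrable_indicator ((hk (s+1) (by linarith)).norm)
        measurableSet_Ioc
    have hcont : ContinuousAt (fun x => ∫ u in s..x, kk u) s :=
      (hkkint.continuous_primitive s).continuousAt
    have h0 : (∫ u in s..s, kk u) = 0 := intervalIntegral.integral_same
    have hev1 : ∀ᶠ x in nhds s, |∫ u in s..x, kk u| < c / (C + 1) := by
      have habs : ContinuousAt (fun x => |∫ u in s..x, kk u|) s := hcont.abs
      have h3 : |∫ u in s..s, kk u| < c / (C + 1) := by
        rw [h0, abs_zero]; positivity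
      exact habs.eventually_lt continuousAt_const h3
    have hev2 : ∀ᶠ x in nhds s, x ∈ Ioo (s - min (1/2) (s/2)) (s + 1/2) :=
      Ioo_mem_nhds (by
        have hmin : 0 < min (1/2 : ℝ) (s/2) := lt_min (by norm_num) (by linarith)
        linarith) (by linarith)
    filter_upwards [hev1, hev2] with x hx1 hx2
    obtain ⟨hx2a, hx2b⟩ := hx2
    have hxpos : 0 < x := by
      have := min_le_right (1/2 : ℝ) (s/2); nlinarith [min_le_right (1/2 : ℝ) (s/2)]
    have hxd : |x - s| ≤ 1/2 := by
      rw [abs_le]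
      constructor <;> [linarith [min_le_left (1/2 : ℝ) (s/2)]; linarith]
    -- pointwise bound on Ι s x
    have hptwise : ∀ u ∈ Ι s x, ‖k u * G (x - u)‖ ≤ kk u * (C * |x - s|) := by
      intro u hu
      have humem : u ∈ Ioc (0:ℝ) (s+1) := by
        rcases le_total s x with h | h
        · rw [uIoc_of_le h] at hu; exact ⟨by linarith [hu.1], by linarith [hu.2]⟩
        · rw [uIoc_of_ge h] at hu
          constructor
          · have := min_le_right (1/2 : ℝ) (s/2); linarith [hu.1]
          · linarith [hu.2]
      have hxu : |x - u| ≤ |x - s| := by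
        rcases le_total s x with h | h
        · rw [uIoc_of_le h] at hu
          rw [abs_of_nonneg (by linarith [hu.2]), abs_of_nonneg (by linarith)]
          linarith [hu.1]
        · rw [uIoc_of_ge h] at hu
          rw [abs_of_nonpos (by linarith [hu.1]), abs_of_nonpos (by linarith)]
          linarith [hu.2]
      have hxum : x - u ∈ Icc (-(s+1)) (s+1) := by
        apply hmem
        calc |x - u| ≤ |x - s| := hxu
          _ ≤ 1/2 := hxd
          _ ≤ s + 1 := by linarith
      have hGxu : |G (x - u)| ≤ C * |x - s| :=
        le_trans (hGb _ hxum) (mul_le_mul_of_nonneg_left hxu hC0)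
      have hkku : kk u = ‖k u‖ := by rw [hkk, indicator_of_mem humem]
      rw [norm_mul, hkku]
      exact mul_le_mul_of_nonneg_left (by rwa [Real.norm_eq_abs]) (norm_nonneg _)
    have hbint : IntervalIntegrable (fun u => kk u * (C * |x - s|)) volume s x :=
      (hkkint.intervalIntegrable).mul_const _
    have hnorm := intervalIntegral.norm_integral_le_abs_of_norm_le
      ((ae_restrict_iff' measurableSet_uIoc).2 (Filter.Eventually.of_forall hptwise)) hbint
    rw [intervalIntegral.integral_mul_const] at hnorm
    calc ‖∫ u in s..x, k u * G (x - u)‖ ≤ |(∫ u in s..x, kk u) * (C * |x - s|)| := hnorm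
      _ = |∫ u in s..x, kk u| * (C * |x - s|) := by
          rw [abs_mul, abs_of_nonneg (mul_nonneg hC0 (abs_nonneg (x - s)))]
      _ ≤ (c / (C + 1)) * (C * |x - s|) := by
          apply mul_le_mul_of_nonneg_right hx1.le (by positivity)
      _ ≤ c * ‖x - s‖ := by
          rw [Real.norm_eq_abs]
          rw [div_mul_eq_mul_div, mul_comm]
          rw [div_le_iff₀ (by positivity)]
          nlinarith [abs_nonneg (x - s), hc.le]
  -- combine
  have heq : (fun x => (∫ u in (0:ℝ)..s, k u * G (x - u)) + ∫ u in s..x, k u * G (x - u))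
      =ᶠ[nhds s] (fun x => ∫ u in (0:ℝ)..x, k u * G (x - u)) := by
    have hev : ∀ᶠ x in nhds s, x ∈ Ioo (s/2) (s + 1) :=
      Ioo_mem_nhds (by linarith) (by linarith)
    filter_upwards [hev] with x hx
    apply intervalIntegral.integral_add_adjacent_intervals (hIIs x)
    rw [intervalIntegrable_iff]
    refine (hII x).mono_set fun u hu => ?_
    rcases le_total s x with h | h
    · rw [uIoc_of_le h] at hu; exact ⟨by linarith [hu.1], by linarith [hu.2, hx.2]⟩
    · rw [uIoc_of_ge h] at hu; exact ⟨by linarith [hu.1, hx.1], by linarith [hu.2]⟩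
  have := (hA.add hB).congr_of_eventuallyEq heq.symm
  simpa using this

lemma gfc_deriv_chain (n : ℕ) (k g : ℝ → ℝ)
    (hk : ∀ T > (0:ℝ), IntegrableOn k (Ioc (0:ℝ) T))
    (hg : ContDiff ℝ (n : ℕ∞) g) (hg0 : ∀ j < n, iteratedDeriv j g 0 = 0) :
    ∀ j ≤ n, ∀ s, 0 < s →
      iteratedDeriv j (fun x => ∫ u in (0:ℝ)..x, k (x - u) * g u) s
        = ∫ u in (0:ℝ)..s, k u * iteratedDeriv j g (s - u) := by
  have hbase : ∀ x : ℝ, (∫ u in (0:ℝ)..x, k (x - u) * g u)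
      = ∫ u in (0:ℝ)..x, k u * g (x - u) := by
    intro x
    have h := intervalIntegral.integral_comp_sub_left (a := 0) (b := x)
      (fun w => k (x - w) * g w) x
    simp only [sub_sub_cancel, sub_self, sub_zero] at h
    exact h.symm
  intro j
  induction j with
  | zero =>
    intro _ s _
    simp only [iteratedDeriv_zero]
    rw [hbase s]
  | succ j ih =>
    intro hj s hs
    have hjn : j < n := Nat.lt_of_succ_le hj
    rw [iteratedDeriv_succ]
    have hev : (iteratedDeriv j (fun x => ∫ u in (0:ℝ)..x, k (x - u) * g u))
        =ᶠ[nhds s] (fun x => ∫ u in (0:ℝ)..x, k u * iteratedDeriv j g (x - u)) := by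
      filter_upwards [Ioi_mem_nhds hs] with x hx
      exact ih hjn.le x hx
    rw [hev.deriv_eq]
    have hG : Differentiable ℝ (iteratedDeriv j g) :=
      hg.differentiable_iteratedDeriv j (by exact_mod_cast hjn)
    have hG' : Continuous (deriv (iteratedDeriv j g)) := by
      rw [← iteratedDeriv_succ]
      exact hg.continuous_iteratedDeriv (j+1) (by exact_mod_cast hj)
    have hG0 : iteratedDeriv j g 0 = 0 := hg0 j hjn
    have hd := gfc_conv_hasDerivAt k (iteratedDeriv j g) hk hG hG' hG0 hs
    rw [hd.deriv]
    refine intervalIntegral.integral_congr fun u _ => ?_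
    rw [← iteratedDeriv_succ]

lemma gfc_fubini (t : ℝ) (ht : 0 < t) (κ k v : ℝ → ℝ)
    (hκm : StronglyMeasurable κ) (hkm : StronglyMeasurable k)
    (hκint : IntegrableOn κ (Ioc (0:ℝ) t)) (hkint : IntegrableOn k (Ioc (0:ℝ) t))
    (hv : Continuous v) :
    ∫ τ in (0:ℝ)..t, κ (t - τ) * (∫ u in (0:ℝ)..τ, k (τ - u) * v u)
      = ∫ u in (0:ℝ)..t, (∫ σ in (0:ℝ)..(t - u), κ (t - u - σ) * k σ) * v u := by
  classical
  set Q : Set ℝ := Ioc (0:ℝ) t with hQ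
  set μ : Measure ℝ := volume.restrict Q with hμ
  obtain ⟨M, hM⟩ := (isCompact_Icc (a := (0:ℝ)) (b := t)).exists_bound_of_continuousOn
    hv.continuousOn
  have hM0 : 0 ≤ M := le_trans (norm_nonneg _) (hM t ⟨ht.le, le_rfl⟩)
  set W : ℝ × ℝ → ℝ := fun p => κ (t - p.1) * (k (p.1 - p.2) * v p.2) with hW
  set S : Set (ℝ × ℝ) := {p : ℝ × ℝ | p.2 ∈ Ioc (0:ℝ) p.1} with hS
  have hSmeas : MeasurableSet S := by
    apply MeasurableSet.inter
    · exact measurableSet_lt measurable_const measurable_snd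
    · exact measurableSet_le measurable_snd measurable_fst
  have hWmeas : StronglyMeasurable W := by
    apply StronglyMeasurable.mul
    · exact hκm.comp_measurable (measurable_const.sub measurable_fst)
    · exact (hkm.comp_measurable (measurable_fst.sub measurable_snd)).mul
        (hv.stronglyMeasurable.comp_measurable measurable_snd)
  -- slices
  have hslice : ∀ τ u : ℝ, S.indicator W (τ, u)
      = (Ioc (0:ℝ) τ).indicator (fun u => κ (t - τ) * (k (τ - u) * v u)) u := by
    intro τ u
    by_cases h : u ∈ Ioc (0:ℝ) τ
    · rw [indicator_of_mem h, indicator_of_mem (show (τ,u) ∈ S from h)]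
    · rw [indicator_of_notMem h, indicator_of_notMem (show (τ,u) ∉ S from h)]
  -- integrability of k ∘ (τ - ·) on Ioc 0 τ
  have hkrefl : ∀ τ : ℝ, 0 < τ → τ ≤ t →
      IntegrableOn (fun u => k (τ - u)) (Ioc (0:ℝ) τ) volume := by
    intro τ hτ0 hτt
    have h1 : IntervalIntegrable k volume 0 τ := by
      rw [intervalIntegrable_iff, uIoc_of_le hτ0.le]
      exact hkint.mono_set (Ioc_subset_Ioc_right hτt)
    have h2 := (h1.comp_sub_left τ).symm
    rw [intervalIntegrable_iff] at h2
    simp only [sub_zero, sub_self] at h2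
    rwa [uIoc_of_le hτ0.le] at h2
  have hκrefl : IntegrableOn (fun τ => κ (t - τ)) (Ioc (0:ℝ) t) volume := by
    have h1 : IntervalIntegrable κ volume 0 t := by
      rw [intervalIntegrable_iff, uIoc_of_le ht.le]; exact hκint
    have h2 := (h1.comp_sub_left t).symm
    rw [intervalIntegrable_iff] at h2
    simp only [sub_zero, sub_self] at h2
    rwa [uIoc_of_le ht.le] at h2
  -- slice integrability
  have hsliceInt : ∀ τ : ℝ, 0 < τ → τ ≤ t →
      IntegrableOn (fun u => κ (t - τ) * (k (τ - u) * v u)) (Ioc (0:ℝ) τ) volume := by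
    intro τ hτ0 hτt
    refine Integrable.const_mul ?_ _
    exact (hkrefl τ hτ0 hτt).mul_continuousOn_of_subset hv.continuousOn
      measurableSet_Ioc (isCompact_Icc (a := (0:ℝ)) (b := τ)) Ioc_subset_Icc_self
  have hslice_integrable : ∀ τ : ℝ, τ ∈ Q → Integrable (fun u => S.indicator W (τ, u)) μ := by
    intro τ hτ
    have : (fun u => S.indicator W (τ, u))
        = (Ioc (0:ℝ) τ).indicator (fun u => κ (t - τ) * (k (τ - u) * v u)) := by
      funext u; exact hslice τ u
    rw [this, hμ, integrable_indicator_iff measurableSet_Ioc, IntegrableOn,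
      Measure.restrict_restrict measurableSet_Ioc]
    have hinter : Ioc (0:ℝ) τ ∩ Q = Ioc (0:ℝ) τ := by
      rw [hQ, Ioc_inter_Ioc, max_self, min_eq_left hτ.2]
    rw [hinter]
    exact hsliceInt τ hτ.1 hτ.2
  -- product integrability
  have hprod : Integrable (S.indicator W) (μ.prod μ) := by
    have hmeas : AEStronglyMeasurable (S.indicator W) (μ.prod μ) :=
      (hWmeas.indicator hSmeas).aestronglyMeasurable
    rw [MeasureTheory.integrable_prod_iff hmeas]
    constructor
    · filter_upwards [ae_restrict_mem measurableSet_Ioc] with τ hτ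
      exact hslice_integrable τ hτ
    · -- integrable iterated norm
      set K : ℝ := ∫ u in Ioc (0:ℝ) t, ‖k u‖ with hK
      have hK0 : 0 ≤ K := setIntegral_nonneg measurableSet_Ioc fun u _ => norm_nonneg _
      have hbound : ∀ τ : ℝ, τ ∈ Q → (∫ u, ‖S.indicator W (τ, u)‖ ∂μ)
          ≤ ‖κ (t - τ)‖ * (M * K) := by
        intro τ hτ
        have h1 : (fun u => ‖S.indicator W (τ, u)‖)
            = (Ioc (0:ℝ) τ).indicator (fun u => ‖κ (t - τ) * (k (τ - u) * v u)‖) := by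
          funext u
          rw [hslice τ u, ← norm_indicator_eq_indicator_norm]
        rw [h1, hμ, integral_indicator measurableSet_Ioc,
          Measure.restrict_restrict measurableSet_Ioc,
          (by rw [hQ, Ioc_inter_Ioc, max_self, min_eq_left hτ.2] :
            Ioc (0:ℝ) τ ∩ Q = Ioc (0:ℝ) τ)]
        have hle : ∫ u in Ioc (0:ℝ) τ, ‖κ (t - τ) * (k (τ - u) * v u)‖
            ≤ ∫ u in Ioc (0:ℝ) τ, ‖κ (t - τ)‖ * (‖k (τ - u)‖ * M) := by
          apply setIntegral_mono_on
          · exact ((hsliceInt τ hτ.1 hτ.2).norm)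
          · exact (((hkrefl τ hτ.1 hτ.2).norm.mul_const M).const_mul _)
          · exact measurableSet_Ioc
          · intro u hu
            rw [norm_mul, norm_mul]
            refine mul_le_mul_of_nonneg_left ?_ (norm_nonneg _)
            refine mul_le_mul_of_nonneg_left ?_ (norm_nonneg _)
            exact hM u ⟨hu.1.le, hu.2.trans hτ.2⟩
        refine hle.trans ?_
        rw [integral_const_mul]
        refine mul_le_mul_of_nonneg_left ?_ (norm_nonneg _)
        rw [integral_mul_const]
        have h6 : (∫ u in Ioc (0:ℝ) τ, ‖k (τ - u)‖) ≤ K := ?_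
        · calc (∫ u in Ioc (0:ℝ) τ, ‖k (τ - u)‖) * M ≤ K * M :=
                mul_le_mul_of_nonneg_right h6 hM0
            _ = M * K := mul_comm _ _
        -- ∫ u in Ioc 0 τ, ‖k (τ - u)‖ = ∫ σ in Ioc 0 τ, ‖k σ‖ ≤ K
        have hsub : ∫ u in Ioc (0:ℝ) τ, ‖k (τ - u)‖ = ∫ σ in Ioc (0:ℝ) τ, ‖k σ‖ := by
          have h := intervalIntegral.integral_comp_sub_left (a := 0) (b := τ)
            (fun w => ‖k w‖) τ
          simp only [sub_self, sub_zero] at h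
          rw [← intervalIntegral.integral_of_le hτ.1.le, ← intervalIntegral.integral_of_le hτ.1.le]
          exact h
        rw [hsub, hK]
        apply setIntegral_mono_set hkint.norm
        · exact Filter.Eventually.of_forall fun u => norm_nonneg _
        · exact HasSubset.Subset.eventuallyLE (Ioc_subset_Ioc_right hτ.2)
      have hdom : Integrable (fun τ => ‖κ (t - τ)‖ * (M * K)) μ := by
        rw [hμ]; exact hκrefl.norm.mul_const _
      refine hdom.mono' ?_ ?_
      · exact (hWmeas.indicator hSmeas).aestronglyMeasurable.norm.integral_prod_right'
      · filter_upwards [ae_restrict_mem measurableSet_Ioc] with τ hτ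
        rw [Real.norm_eq_abs, abs_of_nonneg (integral_nonneg fun u => norm_nonneg _)]
        exact hbound τ hτ
  -- now rewrite LHS as double integral and swap
  have hLHS : ∫ τ in (0:ℝ)..t, κ (t - τ) * (∫ u in (0:ℝ)..τ, k (τ - u) * v u)
      = ∫ τ, (∫ u, S.indicator W (τ, u) ∂μ) ∂μ := by
    rw [intervalIntegral.integral_of_le ht.le]
    refine setIntegral_congr_fun measurableSet_Ioc fun τ hτ => ?_
    rw [intervalIntegral.integral_of_le hτ.1.le]
    have h2 : (fun u => S.indicator W (τ, u))
        = (Ioc (0:ℝ) τ).indicator (fun u => κ (t - τ) * (k (τ - u) * v u)) := by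
      funext u; exact hslice τ u
    rw [h2, hμ, integral_indicator measurableSet_Ioc,
      Measure.restrict_restrict measurableSet_Ioc,
      (by rw [hQ, Ioc_inter_Ioc, max_self, min_eq_left hτ.2] :
        Ioc (0:ℝ) τ ∩ Q = Ioc (0:ℝ) τ), ← integral_const_mul]
  have hswap := MeasureTheory.integral_integral_swap (f := fun τ u => S.indicator W (τ, u))
    (μ := μ) (ν := μ) (by exact hprod)
  rw [hLHS, hswap]
  -- now compute the inner integral for fixed u
  rw [intervalIntegral.integral_of_le ht.le]
  refine setIntegral_congr_fun measurableSet_Ioc fun u hu => ?_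
  have h3 : (fun τ => S.indicator W (τ, u))
      = (Ici u).indicator (fun τ => (κ (t - τ) * k (τ - u)) * v u) := by
    funext τ
    by_cases h : u ≤ τ
    · have hmem : (τ, u) ∈ S := ⟨hu.1, h⟩
      rw [indicator_of_mem hmem, indicator_of_mem (mem_Ici.2 h), hW]
      ring
    · have hmem : (τ, u) ∉ S := fun hc => h hc.2
      rw [indicator_of_notMem hmem, indicator_of_notMem (fun hc => h (mem_Ici.1 hc))]
  rw [h3, hμ, integral_indicator measurableSet_Ici,
    Measure.restrict_restrict measurableSet_Ici]
  have hinter2 : Ici u ∩ Q = Icc u t := by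
    rw [hQ]; ext x
    simp only [mem_inter_iff, mem_Ici, mem_Ioc, mem_Icc]
    constructor
    · rintro ⟨h1, _, h3⟩; exact ⟨h1, h3⟩
    · rintro ⟨h1, h2⟩; exact ⟨h1, lt_of_lt_of_le hu.1 h1, h2⟩
  rw [hinter2, integral_Icc_eq_integral_Ioc, integral_mul_const,
    ← intervalIntegral.integral_of_le hu.2]
  congr 1
  have h4 := intervalIntegral.integral_comp_sub_right (a := u) (b := t)
    (fun σ => κ (t - u - σ) * k σ) u
  simp only [sub_self] at h4
  rw [← h4]
  refine intervalIntegral.integral_congr fun τ _ => ?_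
  have h5 : t - u - (τ - u) = t - τ := by ring
  simp only [h5]

lemma gfc_ae_shift {k k' : ℝ → ℝ} (h : k =ᵐ[volume.restrict (Ioi (0:ℝ))] k') {x : ℝ}
    (hx : 0 < x) :
    ∀ᵐ u ∂(volume : Measure ℝ), u ∈ Ι (0:ℝ) x → k (x - u) = k' (x - u) := by
  have h1 : ∀ᵐ y ∂(volume : Measure ℝ), y ∈ Ioi (0:ℝ) → k y = k' y :=
    (ae_restrict_iff' measurableSet_Ioi).1 h
  have h2 : ∀ᵐ u ∂(volume : Measure ℝ), (x - u) ∈ Ioi (0:ℝ) → k (x - u) = k' (x - u) :=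
    (Measure.measurePreserving_sub_left volume x).quasiMeasurePreserving.ae h1
  have h3 : ∀ᵐ u : ℝ ∂volume, u ≠ x := by
    have hset : {a : ℝ | ¬ a ≠ x} = {x} := by ext a; simp
    rw [ae_iff, hset]
    exact measure_singleton x
  filter_upwards [h2, h3] with u hu hux hmem
  rw [uIoc_of_le hx.le] at hmem
  exact hu (mem_Ioi.2 (by rcases lt_of_le_of_ne hmem.2 hux with h; linarith))

lemma gfc_ae_plain {k k' : ℝ → ℝ} (h : k =ᵐ[volume.restrict (Ioi (0:ℝ))] k') {x : ℝ}
    (hx : 0 < x) :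
    ∀ᵐ u ∂(volume : Measure ℝ), u ∈ Ι (0:ℝ) x → k u = k' u := by
  have h1 : ∀ᵐ y ∂(volume : Measure ℝ), y ∈ Ioi (0:ℝ) → k y = k' y :=
    (ae_restrict_iff' measurableSet_Ioi).1 h
  filter_upwards [h1] with u hu hmem
  rw [uIoc_of_le hx.le] at hmem
  exact hu (mem_Ioi.2 hmem.1)

/-- 2nd Fundamental Theorem of general FC of arbitrary order: for kernels with
    `(κ * k)(t) = t^{n-1}/(n-1)!` and sufficiently regular `f` (with `f⁽ⁿ⁾` locally
    integrable), `I_{(κ)} (∗D_{(k)} f) (t) = f(t) - ∑_{j<n} f⁽ʲ⁾(0) tʲ/j!`, where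
    `∗D_{(k)} f = dⁿ/dtⁿ (k * (f - taylorPoly f n))`. -/
theorem gfc_arbitrary_order_second_fundamental (n : ℕ) (hn : 1 ≤ n) (κ k f : ℝ → ℝ)
    (hκint : ∀ T > (0:ℝ), IntegrableOn κ (Ioc (0:ℝ) T))
    (hkint : ∀ T > (0:ℝ), IntegrableOn k (Ioc (0:ℝ) T))
    (hSonine : ∀ t > (0:ℝ), lconv κ k t = t ^ (n - 1) / (Nat.factorial (n - 1) : ℝ))
    (hf : ContDiff ℝ n f)
    (hfn : ∀ T > (0:ℝ), IntegrableOn (iteratedDeriv n f) (Ioc (0:ℝ) T)) :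
    ∀ t > (0:ℝ),
      lconv κ (fun τ => iteratedDeriv n
          (fun s => ∫ u in (0:ℝ)..s, k (s - u) * (f u - taylorPoly f n u)) τ) t
        = f t - taylorPoly f n t := by
  -- measurable representatives
  have hIoi : Ioi (0:ℝ) = ⋃ m : ℕ, Ioc (0:ℝ) (m+1) := by
    ext x
    simp only [mem_Ioi, mem_iUnion, mem_Ioc]
    constructor
    · intro hx
      obtain ⟨m, hm⟩ := exists_nat_ge x
      exact ⟨m, hx, by push_cast; linarith⟩
    · rintro ⟨m, hm, _⟩; exact hm
  have hkAESM : AEStronglyMeasurable k (volume.restrict (Ioi (0:ℝ))) := by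
    rw [hIoi, aestronglyMeasurable_iUnion_iff]
    intro m; exact (hkint (m+1) (by positivity)).aestronglyMeasurable
  have hκAESM : AEStronglyMeasurable κ (volume.restrict (Ioi (0:ℝ))) := by
    rw [hIoi, aestronglyMeasurable_iUnion_iff]
    intro m; exact (hκint (m+1) (by positivity)).aestronglyMeasurable
  set k' : ℝ → ℝ := hkAESM.mk k with hk'def
  set κ' : ℝ → ℝ := hκAESM.mk κ with hκ'def
  have hk'm : StronglyMeasurable k' := hkAESM.stronglyMeasurable_mk
  have hκ'm : StronglyMeasurable κ' := hκAESM.stronglyMeasurable_mk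
  have hk'e : k =ᵐ[volume.restrict (Ioi (0:ℝ))] k' := hkAESM.ae_eq_mk
  have hκ'e : κ =ᵐ[volume.restrict (Ioi (0:ℝ))] κ' := hκAESM.ae_eq_mk
  have hk'int : ∀ T > (0:ℝ), IntegrableOn k' (Ioc (0:ℝ) T) := fun T hT =>
    (hkint T hT).congr
      (ae_restrict_of_ae_restrict_of_subset Ioc_subset_Ioi_self hk'e)
  have hκ'int : ∀ T > (0:ℝ), IntegrableOn κ' (Ioc (0:ℝ) T) := fun T hT =>
    (hκint T hT).congr
      (ae_restrict_of_ae_restrict_of_subset Ioc_subset_Ioi_self hκ'e)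
  -- g and its properties
  have hgC : ContDiff ℝ (n : ℕ∞) (fun u => f u - taylorPoly f n u) :=
    hf.sub (taylorPoly_contDiff f n)
  have hgiter : ∀ j, j ≤ n → ∀ x : ℝ,
      iteratedDeriv j (fun u => f u - taylorPoly f n u) x
        = iteratedDeriv j f x - iteratedDeriv j (taylorPoly f n) x := by
    intro j hj x
    have hfj : ContDiffOn ℝ (j : ℕ∞) f univ := (hf.of_le (by exact_mod_cast hj)).contDiffOn
    have hpj : ContDiffOn ℝ (j : ℕ∞) (taylorPoly f n) univ :=
      (taylorPoly_contDiff f n).contDiffOn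
    have h := iteratedDerivWithin_sub (mem_univ x) uniqueDiffOn_univ (hfj x (mem_univ x)) (hpj x (mem_univ x))
    rw [iteratedDerivWithin_univ, iteratedDerivWithin_univ, iteratedDerivWithin_univ] at h
    exact h
  have hg0 : ∀ j, j < n → iteratedDeriv j (fun u => f u - taylorPoly f n u) 0 = 0 := by
    intro j hj
    rw [hgiter j hj.le, taylorPoly_iteratedDeriv_at_zero hj, sub_self]
  have hgn : ∀ x : ℝ, iteratedDeriv n (fun u => f u - taylorPoly f n u) x
      = iteratedDeriv n f x := by
    intro x
    rw [hgiter n le_rfl, taylorPoly_iteratedDeriv_top]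
    simp
  have hvcont : Continuous (iteratedDeriv n f) := hf.continuous_iteratedDeriv n le_rfl
  intro t ht
  -- chain
  have hFF' : ∀ x : ℝ, 0 < x →
      (∫ u in (0:ℝ)..x, k (x - u) * (f u - taylorPoly f n u))
        = ∫ u in (0:ℝ)..x, k' (x - u) * (f u - taylorPoly f n u) := by
    intro x hx
    apply intervalIntegral.integral_congr_ae
    filter_upwards [gfc_ae_shift hk'e hx] with u hu hmem
    rw [hu hmem]
  have hchain : ∀ s, 0 < s →
      iteratedDeriv n (fun x => ∫ u in (0:ℝ)..x, k (x - u) * (f u - taylorPoly f n u)) s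
        = ∫ u in (0:ℝ)..s, k' u * iteratedDeriv n f (s - u) := by
    intro s hs
    have h1 : iteratedDeriv n
          (fun x => ∫ u in (0:ℝ)..x, k (x - u) * (f u - taylorPoly f n u)) s
        = iteratedDeriv n
          (fun x => ∫ u in (0:ℝ)..x, k' (x - u) * (f u - taylorPoly f n u)) s := by
      apply Filter.EventuallyEq.iteratedDeriv_eq
      filter_upwards [Ioi_mem_nhds hs] with x hx
      exact hFF' x hx
    rw [h1]
    rw [gfc_deriv_chain n k' (fun u => f u - taylorPoly f n u) hk'int hgC hg0 n le_rfl s hs]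
    refine intervalIntegral.integral_congr fun u _ => ?_
    rw [hgn]
  -- main computation
  simp only [lconv]
  have step1 : ∫ τ in (0:ℝ)..t, κ (t - τ) * iteratedDeriv n
        (fun s => ∫ u in (0:ℝ)..s, k (s - u) * (f u - taylorPoly f n u)) τ
      = ∫ τ in (0:ℝ)..t, κ' (t - τ) * (∫ u in (0:ℝ)..τ, k' (τ - u) * iteratedDeriv n f u) := by
    apply intervalIntegral.integral_congr_ae
    filter_upwards [gfc_ae_shift hκ'e ht] with τ hτ hmem
    have hτ0 : 0 < τ := by rw [uIoc_of_le ht.le] at hmem; exact hmem.1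
    rw [hτ hmem, hchain τ hτ0]
    congr 1
    have h := intervalIntegral.integral_comp_sub_left (a := 0) (b := τ)
      (fun u => k' u * iteratedDeriv n f (τ - u)) τ
    simp only [sub_sub_cancel, sub_self, sub_zero] at h
    exact h.symm
  rw [step1]
  rw [gfc_fubini t ht κ' k' (iteratedDeriv n f) hκ'm hk'm (hκ'int t ht) (hk'int t ht) hvcont]
  -- Sonine
  have hlconv : ∀ s, 0 < s → (∫ σ in (0:ℝ)..s, κ' (s - σ) * k' σ)
      = s ^ (n-1) / (Nat.factorial (n-1) : ℝ) := by
    intro s hs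
    have e1 : lconv κ k s = ∫ σ in (0:ℝ)..s, κ' (s - σ) * k' σ := by
      rw [lconv]
      apply intervalIntegral.integral_congr_ae
      filter_upwards [gfc_ae_shift hκ'e hs, gfc_ae_plain hk'e hs] with σ h1 h2 hmem
      rw [h1 hmem, h2 hmem]
    rw [← e1, hSonine s hs]
  obtain ⟨m, rfl⟩ : ∃ m, n = m + 1 := ⟨n - 1, by omega⟩
  have hrem := gfc_taylor_remainder m f (by exact_mod_cast hf) t
  rw [← hrem]
  apply intervalIntegral.integral_congr_ae
  have hne : ∀ᵐ u : ℝ ∂volume, u ≠ t := by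
    have hset : {a : ℝ | ¬ a ≠ t} = {t} := by ext a; simp
    rw [ae_iff, hset]
    exact measure_singleton t
  filter_upwards [hne] with u hu hmem
  rw [uIoc_of_le ht.le] at hmem
  have hut : 0 < t - u := by
    rcases lt_of_le_of_ne hmem.2 hu with h
    linarith
  rw [hlconv (t - u) hut]
  simp only [Nat.add_sub_cancel]
end
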